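/- arXiv:math/0501356 — 5 statements merged into one kernel-verified Lean document; each statement's English description precedes it below -/
import Mathlib

section
/- Let c = Σ_I α_I (m/x_I) e_I be a homogeneous cycle of multidegree m in the Koszul complex of A = S/𝔞 (𝔞 a monomial ideal) with respect to x_1,...,x_n, where x_I = Π_{i∈I} x_i. Fix a variable x_0 dividing m. Then there exists a cycle c' = Σ_{I'} α_{I'} (m/x_{I'}) e_{I'} homologous to c such that x_0 divides x_{I'} for every index set I' appearing in c'. -/
/-!
STATEMENT 1: In the Koszul complex of `A = S/𝔞` (𝔞 a monomial ideal) with respect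
to `x_1,…,x_v`, every homogeneous cycle `c` of multidegree `m` is homologous to a
homogeneous cycle `c'` of multidegree `m` all of whose basis elements `e_{I'}`
satisfy `x_0 ∣ x_{I'}` (i.e. `i₀ ∈ I'`), for any fixed variable `x_0 ∣ m`.

Chains of the Koszul complex of `A` in homological degree `i` are encoded as
functions `Finset (Fin v) → S` (coefficient of `e_J`), with everything taken
modulo the ideal `𝔞`; a cycle is a chain whose differential lies componentwise
in `𝔞`, and two chains are homologous if their difference is a boundary modulo `𝔞`.
-/

open MvPolynomial

variable {k : Type} [Field k] {v : ℕ}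

/-- Chains of the Koszul complex (coefficients of the `e_J`), with coefficients
written in `S`; they represent chains over `A = S/𝔞`. -/
abbrev KChain (k : Type) [Field k] (v : ℕ) := Finset (Fin v) → MvPolynomial (Fin v) k

/-- The Koszul differential `∂(e_{j₁<…<j_i}) = Σ_l (-1)^{l+1} x_{j_l} e_{J\{j_l}}`,
written on coefficient functions. -/
noncomputable def koszulD (c : KChain k v) : KChain k v := fun J =>
  ∑ i ∈ Jᶜ, (-1 : MvPolynomial (Fin v) k) ^ (J.filter (· < i)).card * X i * c (insert i J)

/-- `c` is a cycle of the Koszul complex of `A = S/𝔞`: its differential vanishes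
modulo `𝔞`. -/
def IsCycleMod (𝔞 : Ideal (MvPolynomial (Fin v) k)) (c : KChain k v) : Prop :=
  ∀ J, koszulD c J ∈ 𝔞

/-- `c` is homogeneous of multidegree `m`: the coefficient of `e_J` is a scalar
multiple of the monomial `m / x_J` (and vanishes when `x_J ∤ m`). -/
def IsHomog (m : Fin v →₀ ℕ) (c : KChain k v) : Prop :=
  ∀ J : Finset (Fin v),
    (∃ a : k, c J = monomial (m - ∑ i ∈ J, Finsupp.single i 1) a) ∧
    (¬ (∑ i ∈ J, Finsupp.single i 1) ≤ m → c J = 0)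

/-- `c` and `c'` are homologous in the Koszul complex of `A = S/𝔞`. -/
def Homologous (𝔞 : Ideal (MvPolynomial (Fin v) k)) (c c' : KChain k v) : Prop :=
  ∃ d : KChain k v, ∀ J, c J - c' J - koszulD d J ∈ 𝔞

namespace KAux

noncomputable def xdeg (J : Finset (Fin v)) : Fin v →₀ ℕ := ∑ i ∈ J, Finsupp.single i 1

lemma xdeg_apply (J : Finset (Fin v)) (i : Fin v) :
    xdeg J i = if i ∈ J then 1 else 0 := by
  classical
  simp [xdeg, Finsupp.finset_sum_apply, Finsupp.single_apply]

lemma xdeg_insert {J : Finset (Fin v)} {i : Fin v} (hi : i ∉ J) :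
    xdeg (insert i J) = xdeg J + Finsupp.single i 1 := by
  rw [xdeg, Finset.sum_insert hi, xdeg, add_comm]

lemma koszulD_sub (c d : KChain k v) (J : Finset (Fin v)) :
    koszulD (fun K => c K - d K) J = koszulD c J - koszulD d J := by
  unfold koszulD
  rw [← Finset.sum_sub_distrib]
  exact Finset.sum_congr rfl fun i _ => by ring

lemma sign_insert (J : Finset (Fin v)) (i j : Fin v) (hi : i ∉ J) :
    ((insert i J).filter (· < j)).card
      = (J.filter (· < j)).card + (if i < j then 1 else 0) := by
  rw [Finset.filter_insert]
  split
  · rw [Finset.card_insert_of_notMem (fun hmem => hi (Finset.mem_filter.mp hmem).1)]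
  · rw [add_zero]

lemma pair_cancel (c : KChain k v) (J : Finset (Fin v)) {i j : Fin v}
    (hi : i ∉ J) (hj : j ∉ J) (hij : i ≠ j) :
    (-1 : MvPolynomial (Fin v) k) ^ (J.filter (· < i)).card * X i *
      ((-1) ^ ((insert i J).filter (· < j)).card * X j * c (insert j (insert i J)))
    + (-1 : MvPolynomial (Fin v) k) ^ (J.filter (· < j)).card * X j *
      ((-1) ^ ((insert j J).filter (· < i)).card * X i * c (insert i (insert j J))) = 0 := by
  rw [Finset.insert_comm j i, sign_insert J i j hi, sign_insert J j i hj]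
  rcases hij.lt_or_gt with hlt | hlt
  · rw [if_pos hlt, if_neg (not_lt.mpr hlt.le)]
    simp only [pow_add, pow_one, pow_zero, add_zero]
    ring
  · rw [if_neg (not_lt.mpr hlt.le), if_pos hlt]
    simp only [pow_add, pow_one, pow_zero, add_zero]
    ring

lemma koszulD_koszulD (c : KChain k v) (J : Finset (Fin v)) :
    koszulD (koszulD c) J = 0 := by
  classical
  unfold koszulD
  simp only [Finset.mul_sum, Finset.compl_insert]
  rw [Finset.sum_sigma']
  refine Finset.sum_involution (fun p _ => ⟨p.2, p.1⟩) ?_ ?_ ?_ ?_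
  · rintro ⟨i, j⟩ hp
    simp only [Finset.mem_sigma, Finset.mem_erase, Finset.mem_compl] at hp
    obtain ⟨hi, hji, hj⟩ := hp
    have := pair_cancel c J hi hj (Ne.symm hji)
    simpa using this
  · rintro ⟨i, j⟩ hp _
    simp only [Finset.mem_sigma, Finset.mem_erase, Finset.mem_compl] at hp
    intro h
    have : j = i := congrArg Sigma.fst h
    exact hp.2.1 this
  · rintro ⟨i, j⟩ hp
    simp only [Finset.mem_sigma, Finset.mem_erase, Finset.mem_compl] at hp ⊢
    exact ⟨hp.2.2, Ne.symm hp.2.1, hp.1⟩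
  · rintro ⟨i, j⟩ hp
    rfl

end KAux

set_option linter.unusedVariables false

open KAux Finset in
theorem koszul_cycle_supported_on_fixed_variable
    (G : Set (Fin v →₀ ℕ))
    (𝔞 : Ideal (MvPolynomial (Fin v) k))
    (h𝔞 : 𝔞 = Ideal.span ((fun α => (monomial α (1 : k) : MvPolynomial (Fin v) k)) '' G))
    (m : Fin v →₀ ℕ) (c : KChain k v)
    (hc : IsCycleMod 𝔞 c) (hhom : IsHomog m c)
    (i₀ : Fin v) (hi₀ : m i₀ ≠ 0) :
    ∃ c' : KChain k v, IsCycleMod 𝔞 c' ∧ IsHomog m c' ∧ Homologous 𝔞 c c' ∧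
      ∀ J, c' J ≠ 0 → i₀ ∈ J := by
  classical
  -- choose coefficients
  set a : Finset (Fin v) → k := fun K => (hhom K).1.choose with ha
  have hex : ∀ K, c K = monomial (m - xdeg K) (a K) := fun K => (hhom K).1.choose_spec
  have hazero : ∀ K, ¬ xdeg K ≤ m → a K = 0 := by
    intro K hK
    have h0 : c K = 0 := (hhom K).2 hK
    rw [hex K] at h0
    exact (MvPolynomial.monomial_eq_zero).mp h0
  -- the homotopy chain
  set h : KChain k v := fun K =>
    if i₀ ∈ K then
      (-1 : MvPolynomial (Fin v) k) ^ ((K.erase i₀).filter (· < i₀)).card *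
        monomial (m - xdeg (K.erase i₀) - Finsupp.single i₀ 1) (a (K.erase i₀))
    else 0 with hh
  -- X i * monomial
  have hXmul : ∀ (i : Fin v) (d : Fin v →₀ ℕ) (b : k),
      (X i : MvPolynomial (Fin v) k) * monomial d b = monomial (Finsupp.single i 1 + d) b := by
    intro i d b
    rw [show (X i : MvPolynomial (Fin v) k) = monomial (Finsupp.single i 1) 1 from rfl,
      monomial_mul, one_mul]
  -- koszulD h J = c J when i₀ ∉ J
  have hmain : ∀ J, i₀ ∉ J → koszulD h J = c J := by
    intro J hJ
    unfold koszulD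
    rw [Finset.sum_eq_single i₀]
    · rw [hh]
      simp only [Finset.mem_insert_self, if_pos, Finset.erase_insert hJ]
      have hle : Finsupp.single i₀ 1 ≤ m - xdeg J := by
        rw [Finsupp.single_le_iff, Finsupp.tsub_apply, xdeg_apply, if_neg hJ]
        omega
      rw [show (-1 : MvPolynomial (Fin v) k) ^ (J.filter (· < i₀)).card * X i₀ *
          ((-1) ^ (J.filter (· < i₀)).card *
            monomial (m - xdeg J - Finsupp.single i₀ 1) (a J))
        = ((-1) ^ ((J.filter (· < i₀)).card + (J.filter (· < i₀)).card)) *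
            (X i₀ * monomial (m - xdeg J - Finsupp.single i₀ 1) (a J)) by
          rw [pow_add]; ring]
      rw [Even.neg_one_pow ⟨_, rfl⟩, one_mul, hXmul, add_comm, tsub_add_cancel_of_le hle,
        hex J]
    · intro b hb hbne
      have : i₀ ∉ insert b J := by
        simp only [Finset.mem_insert]
        rintro (h1 | h1)
        · exact hbne h1.symm
        · exact hJ h1
      rw [hh]
      simp only [if_neg this, mul_zero]
    · intro habs
      exact absurd (Finset.mem_compl.mpr hJ) habs
  set c' : KChain k v := fun J => c J - koszulD h J with hc'
  have hc'zero : ∀ J, i₀ ∉ J → c' J = 0 := by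
    intro J hJ
    rw [hc']
    simp only [hmain J hJ, sub_self]
  -- per-term analysis when i₀ ∈ J
  have hterm : ∀ (J : Finset (Fin v)), i₀ ∈ J → ∀ i ∈ Jᶜ, ∃ b : k,
      (-1 : MvPolynomial (Fin v) k) ^ (J.filter (· < i)).card * X i * h (insert i J)
        = monomial (m - xdeg J) b ∧ (¬ xdeg J ≤ m → b = 0) := by
    intro J hi₀J i hic
    have hiJ : i ∉ J := Finset.mem_compl.mp hic
    have hne : i ≠ i₀ := fun h => hiJ (h ▸ hi₀J)
    have hi₀i : i₀ ∈ insert i J := Finset.mem_insert_of_mem hi₀J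
    have hK : (insert i J).erase i₀ = insert i (J.erase i₀) :=
      Finset.erase_insert_of_ne hne
    set K : Finset (Fin v) := insert i (J.erase i₀) with hKdef
    have hiK : i ∉ J.erase i₀ := fun hmem => hiJ (Finset.mem_of_mem_erase hmem)
    have hi₀K : i₀ ∉ K := by
      simp only [hKdef, Finset.mem_insert]
      rintro (h1 | h1)
      · exact hne h1.symm
      · exact (Finset.notMem_erase i₀ J) h1
    -- exponent bookkeeping
    have e1 : J = insert i₀ (J.erase i₀) := (Finset.insert_erase hi₀J).symm
    have e2 : xdeg (insert i J) = xdeg J + Finsupp.single i 1 := xdeg_insert hiJ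
    have e3 : xdeg J = xdeg (J.erase i₀) + Finsupp.single i₀ 1 := by
      nth_rewrite 1 [e1]
      exact xdeg_insert (Finset.notMem_erase i₀ J)
    have e4 : xdeg K = xdeg (J.erase i₀) + Finsupp.single i 1 := xdeg_insert hiK
    have h1 : xdeg K + Finsupp.single i₀ 1 = xdeg (insert i J) := by
      rw [e4, e2, e3]; abel
    by_cases hgood : xdeg (insert i J) ≤ m
    · -- good case
      refine ⟨(-1 : k) ^ ((J.filter (· < i)).card + ((K.filter (· < i₀)).card)) * a K,
        ?_, ?_⟩
      · rw [hh]
        simp only [if_pos hi₀i, hK]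
        have hexp : m - xdeg K - Finsupp.single i₀ 1 = m - xdeg J - Finsupp.single i 1 := by
          rw [tsub_tsub, h1, e2, tsub_tsub]
        have hle2 : Finsupp.single i 1 ≤ m - xdeg J := by
          refine le_tsub_of_add_le_left ?_
          rw [← e2]; exact hgood
        rw [hexp,
          show (-1 : MvPolynomial (Fin v) k) ^ (J.filter (· < i)).card * X i *
              ((-1) ^ (K.filter (· < i₀)).card *
                monomial (m - xdeg J - Finsupp.single i 1) (a K))
            = ((-1) ^ ((J.filter (· < i)).card + (K.filter (· < i₀)).card)) *
                (X i * monomial (m - xdeg J - Finsupp.single i 1) (a K)) by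
            rw [pow_add]; ring,
          hXmul, add_comm (Finsupp.single i 1), tsub_add_cancel_of_le hle2,
          show ((-1 : MvPolynomial (Fin v) k) ^ ((J.filter (· < i)).card + (K.filter (· < i₀)).card))
            = C ((-1 : k) ^ ((J.filter (· < i)).card + (K.filter (· < i₀)).card)) by
            rw [map_pow, map_neg, map_one],
          C_mul_monomial]
      · intro hbad
        exfalso
        have : xdeg J ≤ xdeg (insert i J) := by rw [e2]; exact le_add_of_nonneg_right (zero_le)
        exact hbad (this.trans hgood)
    · -- bad case: coefficient vanishes
      have hKbad : ¬ xdeg K ≤ m := by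
        intro hKle
        apply hgood
        rw [← h1]
        rw [Finsupp.le_def]
        intro j
        rw [Finsupp.add_apply, Finsupp.single_apply]
        by_cases hj : i₀ = j
        · subst hj
          rw [xdeg_apply, if_neg hi₀K, if_pos rfl]
          omega
        · rw [if_neg hj, add_zero]
          exact (Finsupp.le_def.mp hKle) j
      have haK : a K = 0 := hazero K hKbad
      refine ⟨0, ?_, fun _ => rfl⟩
      rw [hh]
      simp only [if_pos hi₀i, hK, ← hKdef, haK, monomial_zero, mul_zero]
  -- homogeneity of c'
  have hhom' : ∀ J : Finset (Fin v), ∃ b : k,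
      c' J = monomial (m - xdeg J) b ∧ (¬ xdeg J ≤ m → b = 0) := by
    intro J
    by_cases hJ : i₀ ∈ J
    · set bf : Fin v → k := fun i =>
        if hi : i ∈ Jᶜ then (hterm J hJ i hi).choose else 0 with hbf
      have hDh : koszulD h J = monomial (m - xdeg J) (∑ i ∈ Jᶜ, bf i) := by
        unfold koszulD
        rw [map_sum]
        refine Finset.sum_congr rfl fun i hi => ?_
        rw [hbf]
        simp only [dif_pos hi]
        exact (hterm J hJ i hi).choose_spec.1
      refine ⟨a J - ∑ i ∈ Jᶜ, bf i, ?_, ?_⟩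
      · rw [hc']
        simp only [hDh, hex J, ← map_sub]
      · intro hbad
        have haJ : a J = 0 := hazero J hbad
        have hbz : ∀ i ∈ Jᶜ, bf i = 0 := by
          intro i hi
          rw [hbf]
          simp only [dif_pos hi]
          exact (hterm J hJ i hi).choose_spec.2 hbad
        rw [haJ, Finset.sum_eq_zero hbz, sub_zero]
    · exact ⟨0, by rw [hc'zero J hJ, monomial_zero], fun _ => rfl⟩
  refine ⟨c', ?_, ?_, ⟨h, ?_⟩, ?_⟩
  · intro J
    rw [hc', koszulD_sub, koszulD_koszulD, sub_zero]
    exact hc J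
  · intro J
    obtain ⟨b, hb1, hb2⟩ := hhom' J
    exact ⟨⟨b, hb1⟩, fun hbad => by rw [hb1, hb2 hbad, monomial_zero]⟩
  · intro J
    have : c J - c' J - koszulD h J = 0 := by rw [hc']; ring
    rw [this]
    exact Submodule.zero_mem _
  · intro J hne
    by_contra hni
    exact hne (hc'zero J hni)
end

section
/- Let c_1, c_2 be homogeneous cycles of the Koszul complex of A = S/𝔞 with multidegrees m and n respectively. If gcd(m,n) ≠ 1, then the product [c_1][c_2] = 0 in the Koszul homology H_•(K^A). -/
/-!
STATEMENT 2: If `c₁, c₂` are homogeneous cycles of the Koszul complex of `A = S/𝔞`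
(𝔞 a monomial ideal) of multidegrees `m` and `n` with `gcd(m,n) ≠ 1`, then the
product `[c₁][c₂] = 0` in the Koszul homology, i.e. the wedge product `c₁ ∧ c₂`
is a boundary modulo `𝔞`.
-/

open MvPolynomial

variable {k : Type} [Field k] {v : ℕ}

/-- The exterior (wedge) product on Koszul chains, making the Koszul complex a
DG-algebra:  `(c₁ ∧ c₂)(L) = Σ_{I ⊆ L} ± c₁(I) c₂(L \ I)`. -/
noncomputable def kmul (c₁ c₂ : KChain k v) : KChain k v := fun L =>
  ∑ I ∈ L.powerset,
    (-1 : MvPolynomial (Fin v) k) ^ (∑ j ∈ L \ I, (I.filter (j < ·)).card) *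
      c₁ I * c₂ (L \ I)

namespace KoszulAux

/-- Mod-2 congruent exponents give equal powers of `-1`. -/
lemma neg_one_pow_congr {K : Type*} [Monoid K] [HasDistribNeg K] {a b : ℕ}
    (h : a % 2 = b % 2) : ((-1 : K) ^ a = (-1) ^ b) := by
  rw [← Nat.div_add_mod a 2, ← Nat.div_add_mod b 2, pow_add, pow_add, pow_mul, pow_mul,
    neg_one_sq, one_pow, one_pow, h]

/-- Exponent vector of the squarefree monomial supported on `J`. -/
noncomputable def E (J : Finset (Fin v)) : Fin v →₀ ℕ := ∑ t ∈ J, Finsupp.single t 1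

lemma E_apply (J : Finset (Fin v)) (t : Fin v) : E J t = if t ∈ J then 1 else 0 := by
  classical
  rw [E, Finset.sum_apply']
  simp [Finsupp.single_apply]

lemma E_le_mono {J J' : Finset (Fin v)} (h : J ⊆ J') : E J ≤ E J' := by
  intro t
  rw [E_apply, E_apply]
  split_ifs with h1 h2
  · exact le_rfl
  · exact absurd (h h1) h2
  all_goals omega

lemma E_insert {J : Finset (Fin v)} {j : Fin v} (hj : j ∉ J) :
    E (insert j J) = Finsupp.single j 1 + E J := by
  rw [E, E, Finset.sum_insert hj]

lemma E_union {I : Finset (Fin v)} {L : Finset (Fin v)} (h : I ⊆ L) :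
    E I + E (L \ I) = E L := by
  rw [E, E, E, ← Finset.sum_union (Finset.disjoint_sdiff), Finset.union_sdiff_of_subset h]

/-- The scalar form of the Koszul differential. -/
def Df (f : Finset (Fin v) → k) (J : Finset (Fin v)) : k :=
  ∑ j ∈ Jᶜ, (-1 : k) ^ (J.filter (· < j)).card * f (insert j J)

/-- The sign exponent of the wedge product. -/
def invv (I L : Finset (Fin v)) : ℕ := ∑ j ∈ L \ I, (I.filter (j < ·)).card

/-- The scalar form of the wedge product. -/
def Mb (f₁ f₂ : Finset (Fin v) → k) (L : Finset (Fin v)) : k :=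
  ∑ I ∈ L.powerset, (-1 : k) ^ invv I L * f₁ I * f₂ (L \ I)

/-- Transfer `koszulD` to scalars for a multihomogeneous chain. -/
lemma koszulD_eq {m : Fin v →₀ ℕ} {c : KChain k v} {f : Finset (Fin v) → k}
    (hf : ∀ J, c J = monomial (m - E J) (f J))
    (hf0 : ∀ J, ¬ E J ≤ m → f J = 0) (J : Finset (Fin v)) :
    koszulD c J = monomial (m - E J) (Df f J) := by
  rw [koszulD, Df, map_sum]
  refine Finset.sum_congr rfl fun j hj => ?_
  rw [Finset.mem_compl] at hj
  rw [hf (insert j J)]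
  by_cases h : E (insert j J) ≤ m
  · have hexp : (m - E (insert j J)) + Finsupp.single j 1 = m - E J := by
      rw [E_insert hj] at h ⊢
      rw [tsub_add_eq_tsub_tsub_swap, tsub_add_cancel_of_le (le_tsub_of_add_le_right h)]
    calc (-1 : MvPolynomial (Fin v) k) ^ (J.filter (· < j)).card * X j *
          monomial (m - E (insert j J)) (f (insert j J))
        = C ((-1 : k) ^ (J.filter (· < j)).card) *
            (monomial (Finsupp.single j 1) 1 * monomial (m - E (insert j J)) (f (insert j J))) := by
          rw [map_pow, map_neg, map_one, X]; ring
      _ = monomial (m - E J) ((-1 : k) ^ (J.filter (· < j)).card * f (insert j J)) := by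
          rw [monomial_mul, C_mul_monomial, one_mul, add_comm, hexp]
  · simp [hf0 _ h]

lemma Df_eq_zero {m : Fin v →₀ ℕ} {f : Finset (Fin v) → k}
    (hf0 : ∀ J, ¬ E J ≤ m → f J = 0) {J : Finset (Fin v)} (h : ¬ E J ≤ m) :
    Df f J = 0 := by
  rw [Df]
  refine Finset.sum_eq_zero fun j _ => ?_
  rw [hf0 (insert j J) (fun hle => h ((E_le_mono (Finset.subset_insert j J)).trans hle)), mul_zero]

/-- Transfer `kmul` to scalars. -/
lemma kmul_eq {m n : Fin v →₀ ℕ} {c₁ c₂ : KChain k v} {f₁ f₂ : Finset (Fin v) → k}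
    (hf₁ : ∀ J, c₁ J = monomial (m - E J) (f₁ J))
    (hf₁0 : ∀ J, ¬ E J ≤ m → f₁ J = 0)
    (hf₂ : ∀ J, c₂ J = monomial (n - E J) (f₂ J))
    (hf₂0 : ∀ J, ¬ E J ≤ n → f₂ J = 0)
    (L : Finset (Fin v)) :
    kmul c₁ c₂ L = monomial (m + n - E L) (Mb f₁ f₂ L) := by
  rw [kmul, Mb, map_sum]
  refine Finset.sum_congr rfl fun I hI => ?_
  rw [Finset.mem_powerset] at hI
  rw [hf₁ I, hf₂ (L \ I)]
  by_cases h1 : E I ≤ m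
  · by_cases h2 : E (L \ I) ≤ n
    · have hexp : (m - E I) + (n - E (L \ I)) = m + n - E L := by
        rw [tsub_add_tsub_comm h1 h2, E_union hI]
      calc (-1 : MvPolynomial (Fin v) k) ^ invv I L * monomial (m - E I) (f₁ I) *
            monomial (n - E (L \ I)) (f₂ (L \ I))
          = C ((-1 : k) ^ invv I L) *
              (monomial (m - E I) (f₁ I) * monomial (n - E (L \ I)) (f₂ (L \ I))) := by
            rw [map_pow, map_neg, map_one]; ring
        _ = monomial (m + n - E L) ((-1 : k) ^ invv I L * f₁ I * f₂ (L \ I)) := by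
            rw [monomial_mul, C_mul_monomial, hexp, mul_assoc]
    · simp [hf₂0 _ h2]
  · simp [hf₁0 _ h1]

lemma Mb_eq_zero {m n : Fin v →₀ ℕ} {f₁ f₂ : Finset (Fin v) → k}
    (hf₁0 : ∀ J, ¬ E J ≤ m → f₁ J = 0)
    (hf₂0 : ∀ J, ¬ E J ≤ n → f₂ J = 0)
    {L : Finset (Fin v)} (h : ¬ E L ≤ m + n) :
    Mb f₁ f₂ L = 0 := by
  rw [Mb]
  refine Finset.sum_eq_zero fun I hI => ?_
  rw [Finset.mem_powerset] at hI
  by_cases h1 : E I ≤ m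
  · have h2 : ¬ E (L \ I) ≤ n := fun h2 => h (by
      rw [← E_union hI]; exact add_le_add h1 h2)
    simp [hf₂0 _ h2]
  · simp [hf₁0 _ h1]

lemma card_filter_split {I L : Finset (Fin v)} (h : I ⊆ L) (j : Fin v) :
    (L.filter (· < j)).card = (I.filter (· < j)).card + ((L \ I).filter (· < j)).card := by
  rw [← Finset.card_union_of_disjoint
    (Finset.disjoint_filter_filter Finset.disjoint_sdiff).symm.symm, ← Finset.filter_union,
    Finset.union_sdiff_of_subset h]

lemma card_filter_lt_add_gt {I : Finset (Fin v)} {j : Fin v} (hj : j ∉ I) :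
    (I.filter (· < j)).card + (I.filter (j < ·)).card = I.card := by
  conv_rhs => rw [← Finset.card_filter_add_card_filter_not (s := I) (p := (· < j))]
  congr 2
  refine Finset.filter_congr fun t ht => ?_
  have htj : t ≠ j := fun h => hj (h ▸ ht)
  exact ⟨fun h' => not_lt.mpr (le_of_lt h'), fun h' => lt_of_le_of_ne (not_lt.mp h') (Ne.symm htj)⟩

lemma insert_sdiff_insert' {I L : Finset (Fin v)} {j : Fin v} (hj : j ∉ L) (h : I ⊆ L) :
    (insert j L) \ (insert j I) = L \ I := by
  ext t
  simp only [Finset.mem_sdiff, Finset.mem_insert, not_or]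
  constructor
  · rintro ⟨ht1 | ht1, ht2, ht3⟩
    · exact absurd ht1 ht2
    · exact ⟨ht1, ht3⟩
  · rintro ⟨ht1, ht2⟩
    exact ⟨Or.inr ht1, fun h' => hj (h' ▸ ht1), ht2⟩

lemma card_filter_insert_lt {I : Finset (Fin v)} {j j' : Fin v} (hj : j ∉ I) :
    ((insert j I).filter (j' < ·)).card
      = (I.filter (j' < ·)).card + (if j' < j then 1 else 0) := by
  rw [Finset.filter_insert]
  split_ifs with h
  · rw [Finset.card_insert_of_notMem (fun hh => hj (Finset.mem_of_mem_filter j hh))]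
  · rw [add_zero]

lemma invv_V1 {I L : Finset (Fin v)} {j : Fin v} (hj : j ∉ L) (h : I ⊆ L) :
    invv (insert j I) (insert j L) = invv I L + ((L \ I).filter (· < j)).card := by
  have hjI : j ∉ I := fun hh => hj (h hh)
  rw [invv, insert_sdiff_insert' hj h, invv, Finset.card_filter]
  rw [← Finset.sum_add_distrib]
  exact Finset.sum_congr rfl fun j' _ => card_filter_insert_lt hjI

lemma invv_V2 {I L : Finset (Fin v)} {j : Fin v} (hj : j ∉ L) (h : I ⊆ L) :
    invv I (insert j L) = invv I L + (I.filter (j < ·)).card := by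
  have : (insert j L) \ I = insert j (L \ I) :=
    Finset.insert_sdiff_of_notMem L (fun hh => hj (h hh))
  rw [invv, this, Finset.sum_insert (fun hh => hj (Finset.mem_sdiff.mp hh).1), invv, add_comm]

lemma sdiff_insert_eq {I L : Finset (Fin v)} {j : Fin v} (hjL : j ∈ L) :
    L \ (insert j I) = (L \ I).erase j := by
  ext t
  simp only [Finset.mem_sdiff, Finset.mem_insert, Finset.mem_erase, not_or]
  tauto

lemma invv_V3 {I L : Finset (Fin v)} {j : Fin v} (hjL : j ∈ L) (hjI : j ∉ I) (h : I ⊆ L) :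
    invv (insert j I) L + (I.filter (j < ·)).card
      = invv I L + (((L \ I).erase j).filter (· < j)).card := by
  have hmem : j ∈ L \ I := Finset.mem_sdiff.mpr ⟨hjL, hjI⟩
  rw [invv, sdiff_insert_eq hjL, invv, ← Finset.sum_erase_add (L \ I) _ hmem]
  have h2 : ∑ j' ∈ (L \ I).erase j, ((insert j I).filter (j' < ·)).card
      = (∑ j' ∈ (L \ I).erase j, (I.filter (j' < ·)).card)
        + (((L \ I).erase j).filter (· < j)).card := by
    rw [Finset.card_filter, ← Finset.sum_add_distrib]
    exact Finset.sum_congr rfl fun j' _ => card_filter_insert_lt hjI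
  rw [h2]
  ring

/-- Reindexing pairs `(I, j ∈ I)` as `(I', j ∈ L \ I')` with `I = insert j I'`. -/
lemma sum_pairs_reindex {M : Type*} [AddCommMonoid M] (L : Finset (Fin v))
    (F : Finset (Fin v) → Fin v → M) :
    (∑ I ∈ L.powerset, ∑ j ∈ I, F I j)
      = ∑ I ∈ L.powerset, ∑ j ∈ L \ I, F (insert j I) j := by
  rw [Finset.sum_sigma', Finset.sum_sigma']
  refine Finset.sum_nbij' (fun p => ⟨p.1.erase p.2, p.2⟩) (fun p => ⟨insert p.2 p.1, p.2⟩)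
    ?_ ?_ ?_ ?_ ?_
  · rintro ⟨I, j⟩ hp
    rw [Finset.mem_sigma] at hp ⊢
    obtain ⟨h1, h2⟩ := hp
    rw [Finset.mem_powerset] at h1 ⊢
    exact ⟨(Finset.erase_subset _ _).trans h1,
      Finset.mem_sdiff.mpr ⟨h1 h2, Finset.notMem_erase _ _⟩⟩
  · rintro ⟨I, j⟩ hp
    rw [Finset.mem_sigma] at hp ⊢
    obtain ⟨h1, h2⟩ := hp
    rw [Finset.mem_powerset] at h1 ⊢
    rw [Finset.mem_sdiff] at h2
    exact ⟨Finset.insert_subset h2.1 h1, Finset.mem_insert_self _ _⟩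
  · rintro ⟨I, j⟩ hp
    rw [Finset.mem_sigma] at hp
    have := hp.2
    simp only [Finset.insert_erase this]
  · rintro ⟨I, j⟩ hp
    rw [Finset.mem_sigma] at hp
    rw [Finset.mem_sdiff] at *
    simp only [Finset.erase_insert (hp.2.2)]
  · rintro ⟨I, j⟩ hp
    rw [Finset.mem_sigma] at hp
    simp only [Finset.insert_erase hp.2]

/-- The Leibniz rule, in scalar form. -/
lemma leibniz (f₁ f₂ : Finset (Fin v) → k) (L : Finset (Fin v)) :
    Df (Mb f₁ f₂) L
      = (∑ I ∈ L.powerset, (-1 : k) ^ invv I L * Df f₁ I * f₂ (L \ I))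
        + ∑ I ∈ L.powerset, (-1 : k) ^ (invv I L + I.card) * f₁ I * Df f₂ (L \ I) := by
  classical
  set A : k := ∑ j ∈ Lᶜ, ∑ I ∈ L.powerset,
    (-1 : k) ^ (invv I L + I.card + ((L \ I).filter (· < j)).card) * f₁ I *
      f₂ (insert j (L \ I)) with hA
  set B : k := ∑ j ∈ Lᶜ, ∑ I ∈ L.powerset,
    (-1 : k) ^ (invv I L + (I.filter (· < j)).card) * f₁ (insert j I) * f₂ (L \ I) with hB
  set D₁ : k := ∑ I ∈ L.powerset, ∑ j ∈ L \ I,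
    (-1 : k) ^ (invv I L + (I.filter (· < j)).card) * f₁ (insert j I) * f₂ (L \ I) with hD₁
  set D₂ : k := ∑ I ∈ L.powerset, ∑ j ∈ I,
    (-1 : k) ^ (invv I L + I.card + ((L \ I).filter (· < j)).card) * f₁ I *
      f₂ (insert j (L \ I)) with hD₂
  have hL : Df (Mb f₁ f₂) L = A + B := by
    rw [Df, hA, hB, ← Finset.sum_add_distrib]
    refine Finset.sum_congr rfl fun j hj => ?_
    rw [Finset.mem_compl] at hj
    rw [Mb, Finset.sum_powerset_insert hj, mul_add]
    congr 1
    · rw [Finset.mul_sum]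
      refine Finset.sum_congr rfl fun I hI => ?_
      rw [Finset.mem_powerset] at hI
      have hjI : j ∉ I := fun hh => hj (hI hh)
      have h1 : (insert j L) \ I = insert j (L \ I) :=
        Finset.insert_sdiff_of_notMem L hjI
      rw [h1, invv_V2 hj hI]
      have e1 := card_filter_split hI j
      have e2 := card_filter_lt_add_gt hjI
      have hsign : (-1 : k) ^ (L.filter (· < j)).card *
          (-1 : k) ^ (invv I L + (I.filter (j < ·)).card)
          = (-1 : k) ^ (invv I L + I.card + ((L \ I).filter (· < j)).card) := by
        rw [← pow_add]
        exact congrArg _ (by omega)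
      rw [← hsign]
      ring
    · rw [Finset.mul_sum]
      refine Finset.sum_congr rfl fun I hI => ?_
      rw [Finset.mem_powerset] at hI
      have hjI : j ∉ I := fun hh => hj (hI hh)
      rw [insert_sdiff_insert' hj hI, invv_V1 hj hI]
      have e1 := card_filter_split hI j
      have hsign : (-1 : k) ^ (L.filter (· < j)).card *
          (-1 : k) ^ (invv I L + ((L \ I).filter (· < j)).card)
          = (-1 : k) ^ (invv I L + (I.filter (· < j)).card) := by
        rw [← pow_add]
        exact neg_one_pow_congr (by omega)
      rw [← hsign]
      ring
  have hR1 : (∑ I ∈ L.powerset, (-1 : k) ^ invv I L * Df f₁ I * f₂ (L \ I)) = B + D₁ := by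
    rw [hB, hD₁, Finset.sum_comm, ← Finset.sum_add_distrib]
    refine Finset.sum_congr rfl fun I hI => ?_
    rw [Finset.mem_powerset] at hI
    have hsplit : Iᶜ = Lᶜ ∪ (L \ I) := by
      ext t
      simp only [Finset.mem_compl, Finset.mem_union, Finset.mem_sdiff]
      by_cases h : t ∈ L <;> tauto
    have hdis : Disjoint Lᶜ (L \ I) := by
      rw [Finset.disjoint_left]
      intro a ha ha'
      rw [Finset.mem_compl] at ha
      exact ha (Finset.mem_sdiff.mp ha').1
    rw [Df, hsplit, Finset.sum_union hdis, mul_add, add_mul]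
    congr 1
    · rw [Finset.mul_sum, Finset.sum_mul]
      refine Finset.sum_congr rfl fun j hj => ?_
      rw [pow_add]
      ring
    · rw [Finset.mul_sum, Finset.sum_mul]
      refine Finset.sum_congr rfl fun j hj => ?_
      rw [pow_add]
      ring
  have hR2 : (∑ I ∈ L.powerset, (-1 : k) ^ (invv I L + I.card) * f₁ I * Df f₂ (L \ I))
      = A + D₂ := by
    rw [hA, hD₂, Finset.sum_comm, ← Finset.sum_add_distrib]
    refine Finset.sum_congr rfl fun I hI => ?_
    rw [Finset.mem_powerset] at hI
    have hsplit : (L \ I)ᶜ = Lᶜ ∪ I := by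
      ext t
      simp only [Finset.mem_compl, Finset.mem_union, Finset.mem_sdiff, not_and, not_not]
      by_cases h : t ∈ L
      · by_cases h' : t ∈ I <;> tauto
      · have : t ∉ I := fun hh => h (hI hh)
        tauto
    have hdis : Disjoint Lᶜ I := by
      rw [Finset.disjoint_left]
      intro a ha ha'
      rw [Finset.mem_compl] at ha
      exact ha (hI ha')
    rw [Df, hsplit, Finset.sum_union hdis, mul_add]
    congr 1
    · rw [Finset.mul_sum]
      refine Finset.sum_congr rfl fun j hj => ?_
      rw [pow_add]
      ring
    · rw [Finset.mul_sum]
      refine Finset.sum_congr rfl fun j hj => ?_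
      rw [pow_add]
      ring
  have hD : D₂ = -D₁ := by
    rw [hD₂, hD₁, sum_pairs_reindex L, ← Finset.sum_neg_distrib]
    · refine Finset.sum_congr rfl fun I hI => ?_
      rw [← Finset.sum_neg_distrib]
      refine Finset.sum_congr rfl fun j hj => ?_
      rw [Finset.mem_powerset] at hI
      rw [Finset.mem_sdiff] at hj
      obtain ⟨hjL, hjI⟩ := hj
      have hmem : j ∈ L \ I := Finset.mem_sdiff.mpr ⟨hjL, hjI⟩
      have h1 : L \ insert j I = (L \ I).erase j := sdiff_insert_eq hjL
      have h2 : insert j (L \ insert j I) = L \ I := by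
        rw [h1, Finset.insert_erase hmem]
      have h3 : (insert j I).card = I.card + 1 := Finset.card_insert_of_notMem hjI
      have e1 := invv_V3 hjL hjI hI
      have e2 := card_filter_lt_add_gt hjI
      have hsign : (-1 : k) ^ (invv (insert j I) L + (insert j I).card +
            ((L \ insert j I).filter (· < j)).card)
          = -(-1 : k) ^ (invv I L + (I.filter (· < j)).card) := by
        rw [h1, h3]
        have : (-1 : k) ^ (invv I L + (I.filter (· < j)).card + 1)
            = -(-1 : k) ^ (invv I L + (I.filter (· < j)).card) := by
          rw [pow_succ, mul_neg_one]
        rw [← this]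
        exact neg_one_pow_congr (by omega)
      rw [h2, hsign]
      ring
  rw [hL, hR1, hR2, hD]
  ring

end KoszulAux

open KoszulAux

theorem koszul_homology_product_vanishes_of_not_coprime
    (G : Set (Fin v →₀ ℕ))
    (𝔞 : Ideal (MvPolynomial (Fin v) k))
    (h𝔞 : 𝔞 = Ideal.span ((fun α => (monomial α (1 : k) : MvPolynomial (Fin v) k)) '' G))
    (m n : Fin v →₀ ℕ) (c₁ c₂ : KChain k v)
    (hc₁ : IsCycleMod 𝔞 c₁) (hhom₁ : IsHomog m c₁)
    (hc₂ : IsCycleMod 𝔞 c₂) (hhom₂ : IsHomog n c₂)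
    (hgcd : ¬ Disjoint m.support n.support) :
    ∃ d : KChain k v, ∀ L, kmul c₁ c₂ L - koszulD d L ∈ 𝔞 := by
  classical
  obtain ⟨i, him, hin⟩ := Finset.not_disjoint_iff.mp hgcd
  have hmi : m i ≠ 0 := Finsupp.mem_support_iff.mp him
  have hni : n i ≠ 0 := Finsupp.mem_support_iff.mp hin
  set f₁ : Finset (Fin v) → k := fun J => (hhom₁ J).1.choose with hf₁def
  set f₂ : Finset (Fin v) → k := fun J => (hhom₂ J).1.choose with hf₂def
  have hf₁ : ∀ J, c₁ J = monomial (m - E J) (f₁ J) := fun J => (hhom₁ J).1.choose_spec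
  have hf₂ : ∀ J, c₂ J = monomial (n - E J) (f₂ J) := fun J => (hhom₂ J).1.choose_spec
  have hf₁0 : ∀ J, ¬ E J ≤ m → f₁ J = 0 := by
    intro J hJ
    have h0 : c₁ J = 0 := (hhom₁ J).2 hJ
    rw [hf₁ J] at h0
    exact monomial_eq_zero.mp h0
  have hf₂0 : ∀ J, ¬ E J ≤ n → f₂ J = 0 := by
    intro J hJ
    have h0 : c₂ J = 0 := (hhom₂ J).2 hJ
    rw [hf₂ J] at h0
    exact monomial_eq_zero.mp h0
  -- the candidate bounding chain
  refine ⟨fun L => if i ∈ L then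
      monomial (m + n - E L)
        ((-1 : k) ^ (L.filter (· < i)).card * Mb f₁ f₂ (L.erase i)) else 0, fun L => ?_⟩
  set d : KChain k v := fun L => if i ∈ L then
      monomial (m + n - E L)
        ((-1 : k) ^ (L.filter (· < i)).card * Mb f₁ f₂ (L.erase i)) else 0 with hd
  have hkm := kmul_eq hf₁ hf₁0 hf₂ hf₂0 L
  -- generic fact: single j 1 ≤ m + n - E L for j ∉ L with (m+n) j ≠ 0
  have hsingle_le : ∀ (L' : Finset (Fin v)) (j : Fin v), j ∉ L' → (m + n) j ≠ 0 →
      Finsupp.single j 1 ≤ m + n - E L' := by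
    intro L' j hj hmn
    rw [Finsupp.single_le_iff, Finsupp.tsub_apply, E_apply, if_neg hj]
    omega
  by_cases hiL : i ∈ L
  · -- main case: `i ∈ L`
    set L' := L.erase i with hL'
    have hiL' : i ∉ L' := Finset.notMem_erase i L
    -- compute `koszulD d L`
    have hkd : koszulD d L = monomial (m + n - E L)
        (∑ j ∈ Lᶜ, (-1 : k) ^ (L.filter (· < j)).card *
          ((-1 : k) ^ ((insert j L).filter (· < i)).card * Mb f₁ f₂ (insert j L'))) := by
      rw [koszulD, map_sum]
      refine Finset.sum_congr rfl fun j hj => ?_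
      rw [Finset.mem_compl] at hj
      have hji : j ≠ i := fun h => hj (h ▸ hiL)
      have hdj : d (insert j L) = monomial (m + n - E (insert j L))
          ((-1 : k) ^ ((insert j L).filter (· < i)).card * Mb f₁ f₂ (insert j L')) := by
        simp only [hd]
        rw [if_pos (Finset.mem_insert_of_mem hiL), Finset.erase_insert_of_ne hji]
      rw [hdj]
      by_cases hb : Mb f₁ f₂ (insert j L') = 0
      · rw [hb]; simp
      · have hEle : E (insert j L') ≤ m + n := by
          by_contra hcon
          exact hb (Mb_eq_zero hf₁0 hf₂0 hcon)
        have hmnj : (m + n) j ≠ 0 := by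
          have := hEle j
          rw [E_apply, if_pos (Finset.mem_insert_self j L')] at this
          omega
        have hexp : (m + n - E (insert j L)) + Finsupp.single j 1 = m + n - E L := by
          rw [E_insert hj, tsub_add_eq_tsub_tsub_swap,
            tsub_add_cancel_of_le (hsingle_le L j hj hmnj)]
        calc (-1 : MvPolynomial (Fin v) k) ^ (L.filter (· < j)).card * X j *
              monomial (m + n - E (insert j L))
                ((-1 : k) ^ ((insert j L).filter (· < i)).card * Mb f₁ f₂ (insert j L'))
            = C ((-1 : k) ^ (L.filter (· < j)).card) *
                (monomial (Finsupp.single j 1) 1 * monomial (m + n - E (insert j L))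
                  ((-1 : k) ^ ((insert j L).filter (· < i)).card * Mb f₁ f₂ (insert j L'))) := by
              rw [map_pow, map_neg, map_one, X]; ring
          _ = monomial (m + n - E L) ((-1 : k) ^ (L.filter (· < j)).card *
                ((-1 : k) ^ ((insert j L).filter (· < i)).card * Mb f₁ f₂ (insert j L'))) := by
              rw [monomial_mul, C_mul_monomial, one_mul, add_comm, hexp]
    -- the key scalar identity
    have hscalar : Mb f₁ f₂ L -
        (∑ j ∈ Lᶜ, (-1 : k) ^ (L.filter (· < j)).card *
          ((-1 : k) ^ ((insert j L).filter (· < i)).card * Mb f₁ f₂ (insert j L')))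
        = (-1 : k) ^ (L.filter (· < i)).card * Df (Mb f₁ f₂) L' := by
      have hcompl : L'ᶜ = insert i Lᶜ := by
        ext t
        simp only [hL', Finset.mem_compl, Finset.mem_erase, Finset.mem_insert, not_and]
        by_cases ht : t = i <;> simp [ht] <;> tauto
      have hterm_i : (L'.filter (· < i)).card = (L.filter (· < i)).card := by
        rw [hL', Finset.filter_erase,
          Finset.erase_eq_of_notMem (s := L.filter (· < i))
            (fun hh => lt_irrefl i (Finset.mem_filter.mp hh).2)]
      rw [Df, hcompl, Finset.sum_insert (Finset.notMem_compl.mpr hiL),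
        Finset.insert_erase hiL, hterm_i, mul_add, ← mul_assoc, ← pow_add,
        neg_one_pow_congr (b := 0) (by omega), pow_zero, one_mul, Finset.mul_sum,
        sub_eq_add_neg, ← Finset.sum_neg_distrib]
      congr 1
      refine Finset.sum_congr rfl fun j hj => ?_
      rw [Finset.mem_compl] at hj
      have hji : j ≠ i := fun h => hj (h ▸ hiL)
      have hjf : j ∉ L.filter (· < i) := fun hh => hj (Finset.mem_of_mem_filter j hh)
      have hpj : ((insert j L).filter (· < i)).card
          = (L.filter (· < i)).card + (if j < i then 1 else 0) := by
        rw [Finset.filter_insert]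
        split_ifs with h
        · rw [Finset.card_insert_of_notMem hjf]
        · rw [add_zero]
      have hrj : (L'.filter (· < j)).card + (if i < j then 1 else 0)
          = (L.filter (· < j)).card := by
        rw [hL', Finset.filter_erase]
        split_ifs with h
        · exact Finset.card_erase_add_one (Finset.mem_filter.mpr ⟨hiL, h⟩)
        · rw [add_zero,
            Finset.erase_eq_of_notMem (s := L.filter (· < j))
              (fun hh => h (Finset.mem_filter.mp hh).2)]
      have hsign : (-1 : k) ^ (L.filter (· < j)).card *
            (-1 : k) ^ ((insert j L).filter (· < i)).card
          = -((-1 : k) ^ (L.filter (· < i)).card * (-1 : k) ^ (L'.filter (· < j)).card) := by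
        have hstep : (-1 : k) ^ ((L.filter (· < i)).card + (L'.filter (· < j)).card + 1)
            = -((-1 : k) ^ ((L.filter (· < i)).card + (L'.filter (· < j)).card)) := by
          rw [pow_succ, mul_neg_one]
        rw [← pow_add, ← pow_add, ← hstep]
        refine KoszulAux.neg_one_pow_congr ?_
        rcases lt_or_gt_of_ne hji with hlt | hlt
        · rw [if_pos hlt] at hpj
          rw [if_neg (asymm hlt)] at hrj
          omega
        · rw [if_neg (asymm hlt)] at hpj
          rw [if_pos hlt] at hrj
          omega
      calc -((-1 : k) ^ (L.filter (· < j)).card *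
            ((-1 : k) ^ ((insert j L).filter (· < i)).card * Mb f₁ f₂ (insert j L')))
          = ((-1 : k) ^ (L.filter (· < j)).card *
              (-1 : k) ^ ((insert j L).filter (· < i)).card) * (-(Mb f₁ f₂ (insert j L'))) := by
            ring
        _ = (-1 : k) ^ (L.filter (· < i)).card *
              ((-1 : k) ^ (L'.filter (· < j)).card * Mb f₁ f₂ (insert j L')) := by
            rw [hsign]; ring
    rw [hkm, hkd, ← map_sub, hscalar, leibniz, h𝔞, mul_add, map_add]
    apply Ideal.add_mem
    · rw [Finset.mul_sum, map_sum]
      apply Ideal.sum_mem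
      intro I hI
      rw [Finset.mem_powerset] at hI
      by_cases hDz : Df f₁ I = 0
      · rw [hDz]
        norm_num
      by_cases hfz : f₂ (L' \ I) = 0
      · rw [hfz]
        norm_num
      have hIm : E I ≤ m := by
        by_contra hcon
        exact hDz (Df_eq_zero hf₁0 hcon)
      have hI2n : E (L' \ I) ≤ n := by
        by_contra hcon
        exact hfz (hf₂0 _ hcon)
      have hmem := hc₁ I
      rw [koszulD_eq hf₁ hf₁0 I, h𝔞, mem_ideal_span_monomial_image] at hmem
      obtain ⟨γ, hγG, hγle⟩ := hmem (m - E I) (by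
        rw [mem_support_iff, coeff_monomial, if_pos rfl]
        exact hDz)
      have hle2 : m - E I ≤ m + n - E L := by
        intro t
        rw [Finsupp.tsub_apply, Finsupp.tsub_apply, Finsupp.add_apply, E_apply, E_apply]
        have h1 := hIm t
        rw [E_apply] at h1
        have h2 := hI2n t
        rw [E_apply] at h2
        by_cases htI : t ∈ I
        · have htL : t ∈ L := Finset.mem_of_mem_erase (hI htI)
          rw [if_pos htI] at h1 ⊢
          rw [if_pos htL]
          omega
        · rw [if_neg htI]
          by_cases htL : t ∈ L
          · rw [if_pos htL]
            by_cases hti : t = i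
            · subst hti
              omega
            · have ht2 : t ∈ L' \ I :=
                Finset.mem_sdiff.mpr ⟨Finset.mem_erase.mpr ⟨hti, htL⟩, htI⟩
              rw [if_pos ht2] at h2
              omega
          · rw [if_neg htL]
            omega
      rw [mem_ideal_span_monomial_image]
      intro xi hxi
      have hxi' : xi = m + n - E L :=
        Finset.mem_singleton.mp (support_monomial_subset hxi)
      exact ⟨γ, hγG, hxi' ▸ (hγle.trans hle2)⟩
    · rw [Finset.mul_sum, map_sum]
      apply Ideal.sum_mem
      intro I hI
      rw [Finset.mem_powerset] at hI
      by_cases hfz : f₁ I = 0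
      · rw [hfz]
        norm_num
      by_cases hDz : Df f₂ (L' \ I) = 0
      · rw [hDz]
        norm_num
      have hIm : E I ≤ m := by
        by_contra hcon
        exact hfz (hf₁0 _ hcon)
      have hI2n : E (L' \ I) ≤ n := by
        by_contra hcon
        exact hDz (Df_eq_zero hf₂0 hcon)
      have hmem := hc₂ (L' \ I)
      rw [koszulD_eq hf₂ hf₂0 (L' \ I), h𝔞, mem_ideal_span_monomial_image] at hmem
      obtain ⟨γ, hγG, hγle⟩ := hmem (n - E (L' \ I)) (by
        rw [mem_support_iff, coeff_monomial, if_pos rfl]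
        exact hDz)
      have hle2 : n - E (L' \ I) ≤ m + n - E L := by
        intro t
        rw [Finsupp.tsub_apply, Finsupp.tsub_apply, Finsupp.add_apply, E_apply, E_apply]
        have h1 := hIm t
        rw [E_apply] at h1
        have h2 := hI2n t
        rw [E_apply] at h2
        by_cases ht2 : t ∈ L' \ I
        · have htL : t ∈ L := Finset.mem_of_mem_erase (Finset.mem_sdiff.mp ht2).1
          rw [if_pos ht2] at h2 ⊢
          rw [if_pos htL]
          omega
        · rw [if_neg ht2]
          by_cases htL : t ∈ L
          · rw [if_pos htL]
            by_cases hti : t = i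
            · subst hti
              omega
            · have htI : t ∈ I := by
                by_contra hcon
                exact ht2 (Finset.mem_sdiff.mpr ⟨Finset.mem_erase.mpr ⟨hti, htL⟩, hcon⟩)
              rw [if_pos htI] at h1
              omega
          · rw [if_neg htL]
            omega
      rw [mem_ideal_span_monomial_image]
      intro xi hxi
      have hxi' : xi = m + n - E L :=
        Finset.mem_singleton.mp (support_monomial_subset hxi)
      exact ⟨γ, hγG, hxi' ▸ (hγle.trans hle2)⟩
  · -- here `koszulD d L = kmul c₁ c₂ L` exactly
    have hkd : koszulD d L = monomial (m + n - E L) (Mb f₁ f₂ L) := by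
      rw [koszulD]
      rw [Finset.sum_eq_single i]
      · have hd1 : d (insert i L) = monomial (m + n - E (insert i L))
            ((-1 : k) ^ (L.filter (· < i)).card * Mb f₁ f₂ L) := by
          simp only [hd]
          rw [if_pos (Finset.mem_insert_self i L), Finset.erase_insert hiL,
            Finset.filter_insert, if_neg (lt_irrefl i)]
        rw [hd1]
        have hexp : (m + n - E (insert i L)) + Finsupp.single i 1 = m + n - E L := by
          rw [E_insert hiL, tsub_add_eq_tsub_tsub_swap,
            tsub_add_cancel_of_le (hsingle_le L i hiL (by rw [Finsupp.add_apply]; omega))]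
        calc (-1 : MvPolynomial (Fin v) k) ^ (L.filter (· < i)).card * X i *
              monomial (m + n - E (insert i L))
                ((-1 : k) ^ (L.filter (· < i)).card * Mb f₁ f₂ L)
            = C ((-1 : k) ^ (L.filter (· < i)).card) *
                (monomial (Finsupp.single i 1) 1 * monomial (m + n - E (insert i L))
                  ((-1 : k) ^ (L.filter (· < i)).card * Mb f₁ f₂ L)) := by
              rw [map_pow, map_neg, map_one, X]; ring
          _ = monomial (m + n - E L)
                ((-1 : k) ^ (L.filter (· < i)).card *
                  ((-1 : k) ^ (L.filter (· < i)).card * Mb f₁ f₂ L)) := by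
              rw [monomial_mul, C_mul_monomial, one_mul, add_comm, hexp]
          _ = monomial (m + n - E L) (Mb f₁ f₂ L) := by
              rw [← mul_assoc, ← pow_add,
                neg_one_pow_congr (a := (L.filter (· < i)).card + (L.filter (· < i)).card)
                  (b := 0) (by omega), pow_zero, one_mul]
      · intro j hj hji
        have : d (insert j L) = 0 := by
          simp only [hd]
          rw [if_neg]
          simp only [Finset.mem_insert, not_or]
          exact ⟨Ne.symm hji, hiL⟩
        rw [this, mul_zero]
      · intro h
        exact absurd (Finset.mem_compl.mpr hiL) h
    rw [hkm, hkd, sub_self]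
    exact Ideal.zero_mem 𝔞
end

section
/- Let 𝔞 ⊆ S = k[x_1,...,x_n] be a monomial ideal generated in degree two, with minimal monomial generating set G consisting of squarefree degree-2 monomials. If I ⊆ G is an nbc-set (the associated graph on [n], with edge {i,j} whenever x_i x_j ∈ I, contains no broken circuit with respect to a fixed monomial order), then whenever lcm(I) = lcm(I \ {m}) for some m ∈ I, one has cl(I) = cl(I \ {m}) - 1. -/
/-!
STATEMENT 3: For an ideal generated by squarefree degree-2 monomials (encoded as
edges, i.e. 2-element subsets of `Fin v`), if `I` is an nbc-set (its graph contains
no broken circuit w.r.t. a fixed monomial order on the quadratic monomials) and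
`lcm(I) = lcm(I \ {m})` for some `m ∈ I`, then `cl(I) = cl(I \ {m}) - 1`.
-/

variable {v : ℕ}

/-- Squarefree quadratic monomials are encoded as edges: 2-element subsets of `Fin v`. -/
abbrev Edge (v : ℕ) := Finset (Fin v)

/-- Vertex set of a set of edges: the support of `lcm(I)`. -/
def vtx (I : Finset (Edge v)) : Finset (Fin v) := I.sup id

/-- `cl I`: the number of connected components of the graph whose vertices are the
monomials (edges) of `I` and where two monomials are adjacent iff they are not
coprime (i.e. the edges share a vertex); equivalently, the number of equivalence
classes of `I` under the transitive closure of non-coprimality. -/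
noncomputable def cl (I : Finset (Edge v)) : ℕ :=
  Nat.card ((SimpleGraph.fromRel
    (fun a b : I => ¬ Disjoint (a : Edge v) (b : Edge v))).ConnectedComponent)

/-- `C` is a circuit: a nonempty connected set of edges in which every covered
vertex lies in exactly two edges. -/
noncomputable def IsCircuit (C : Finset (Edge v)) : Prop :=
  C.Nonempty ∧ (∀ x ∈ vtx C, (C.filter (fun e => x ∈ e)).card = 2) ∧ cl C = 1

/-- `I` contains a broken circuit relative to the generator set `G` and the
monomial order `ord`: there is an edge `e ∈ G` such that `I ∪ {e}` contains a
circuit `C` with `e ∈ C` and `e` the `ord`-largest edge of `C`. -/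
noncomputable def HasBrokenCircuit (G : Finset (Edge v)) (ord : Edge v → ℕ)
    (I : Finset (Edge v)) : Prop :=
  ∃ e ∈ G, ∃ C ⊆ insert e I, IsCircuit C ∧ e ∈ C ∧ ∀ f ∈ C, f ≠ e → ord f < ord e

section Aux

open SimpleGraph

/-- The vertex graph of a set of edges. -/
def H (I : Finset (Edge v)) : SimpleGraph (Fin v) :=
  SimpleGraph.fromRel (fun x y => ({x, y} : Finset (Fin v)) ∈ I)

/-- The edge graph (monomials adjacent iff non-coprime). -/
def Ge (I : Finset (Edge v)) : SimpleGraph I :=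
  SimpleGraph.fromRel (fun a b : I => ¬ Disjoint (a : Edge v) (b : Edge v))

lemma cl_def (I : Finset (Edge v)) : cl I = Nat.card (Ge I).ConnectedComponent := rfl

lemma adj_H {I : Finset (Edge v)} {x y : Fin v} :
    (H I).Adj x y ↔ x ≠ y ∧ ({x, y} : Finset (Fin v)) ∈ I := by
  simp only [H, fromRel_adj]
  constructor
  · rintro ⟨h, h2 | h2⟩
    · exact ⟨h, h2⟩
    · exact ⟨h, by rwa [Finset.pair_comm]⟩
  · rintro ⟨h, h2⟩; exact ⟨h, Or.inl h2⟩

lemma adj_Ge {I : Finset (Edge v)} {a b : I} :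
    (Ge I).Adj a b ↔ a ≠ b ∧ ¬ Disjoint (a : Edge v) (b : Edge v) := by
  simp only [Ge, fromRel_adj]
  constructor
  · rintro ⟨h, h2 | h2⟩
    · exact ⟨h, h2⟩
    · exact ⟨h, fun hd => h2 hd.symm⟩
  · rintro ⟨h, h2⟩; exact ⟨h, Or.inl h2⟩

lemma mem_vtx {I : Finset (Edge v)} {x : Fin v} :
    x ∈ vtx I ↔ ∃ e ∈ I, x ∈ e := by
  simp [vtx, Finset.mem_sup]

lemma pair_eq_pair {α : Type*} [DecidableEq α] {a b c d : α}
    (h : ({a, b} : Finset α) = {c, d}) : (a = c ∧ b = d) ∨ (a = d ∧ b = c) := by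
  have h' : ({a, b} : Set α) = {c, d} := by
    have := congrArg (fun s : Finset α => (s : Set α)) h
    simpa using this
  exact Set.pair_eq_pair_iff.mp h'

lemma isolated {I : Finset (Edge v)} {x y : Fin v} (hx : x ∉ vtx I)
    (h : (H I).Reachable x y) : x = y := by
  obtain ⟨w⟩ := h
  cases w with
  | nil => rfl
  | cons h p =>
    exact absurd (mem_vtx.mpr ⟨_, (adj_H.mp h).2, Finset.mem_insert_self _ _⟩) hx

lemma samedge {I : Finset (Edge v)} (h2 : ∀ e ∈ I, e.card = 2) {e : Edge v} (he : e ∈ I)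
    {x y : Fin v} (hx : x ∈ e) (hy : y ∈ e) : (H I).Reachable x y := by
  rcases eq_or_ne x y with rfl | hne
  · rfl
  · have hsub : ({x, y} : Finset (Fin v)) ⊆ e := by
      intro z hz; rcases Finset.mem_insert.mp hz with rfl | hz
      · exact hx
      · exact (Finset.mem_singleton.mp hz) ▸ hy
    have : ({x, y} : Finset (Fin v)) = e := by
      apply Finset.eq_of_subset_of_card_le hsub
      rw [h2 e he, Finset.card_insert_of_notMem (by simp [hne]), Finset.card_singleton]
    exact (adj_H.mpr ⟨hne, this ▸ he⟩).reachable

lemma reach_Ge_aux {I : Finset (Edge v)} :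
    ∀ {x y : Fin v}, (H I).Walk x y → ∀ {e f : Edge v} (he : e ∈ I) (hf : f ∈ I),
      x ∈ e → y ∈ f → (Ge I).Reachable ⟨e, he⟩ ⟨f, hf⟩
  | x, _, Walk.nil, e, f, he, hf, hx, hy => by
    rcases eq_or_ne e f with rfl | hne
    · rfl
    · exact ((adj_Ge.mpr ⟨by simpa using hne,
        Finset.not_disjoint_iff.mpr ⟨x, hx, hy⟩⟩).reachable)
  | x, y, Walk.cons (v := b) hadj p, e, f, he, hf, hx, hy => by
    have hab : ({x, b} : Finset (Fin v)) ∈ I := (adj_H.mp hadj).2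
    have tail : (Ge I).Reachable ⟨{x, b}, hab⟩ ⟨f, hf⟩ :=
      reach_Ge_aux p hab hf (by simp) hy
    rcases eq_or_ne e ({x, b} : Finset (Fin v)) with h' | hne
    · rw [show (⟨e, he⟩ : I) = ⟨{x, b}, hab⟩ from Subtype.ext h']
      exact tail
    · exact ((adj_Ge.mpr ⟨by simpa using hne,
        Finset.not_disjoint_iff.mpr ⟨x, hx, Finset.mem_insert_self _ _⟩⟩).reachable).trans tail

section A
variable {I : Finset (Edge v)} (h2 : ∀ e ∈ I, e.card = 2)

noncomputable def vert (h2 : ∀ e ∈ I, e.card = 2) (e : I) : Fin v :=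
  e.1.min' (Finset.card_pos.mp (by rw [h2 e.1 e.2]; norm_num))

lemma vert_mem (e : I) : vert h2 e ∈ (e : Edge v) := Finset.min'_mem _ _

lemma vert_const_adj {a b : I} (hadj : (Ge I).Adj a b) :
    (H I).connectedComponentMk (vert h2 a) = (H I).connectedComponentMk (vert h2 b) := by
  obtain ⟨-, hnd⟩ := adj_Ge.mp hadj
  obtain ⟨x, hxa, hxb⟩ := Finset.not_disjoint_iff.mp hnd
  exact ConnectedComponent.sound
    (((samedge h2 a.2 (vert_mem h2 a) hxa).trans (samedge h2 b.2 hxb (vert_mem h2 b))))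

lemma vert_const_walk : ∀ {a b : I}, (Ge I).Walk a b →
    (H I).connectedComponentMk (vert h2 a) = (H I).connectedComponentMk (vert h2 b)
  | _, _, Walk.nil => rfl
  | _, _, Walk.cons hadj p => (vert_const_adj h2 hadj).trans (vert_const_walk p)

noncomputable def phiL (h2 : ∀ e ∈ I, e.card = 2) :
    (Ge I).ConnectedComponent → (H I).ConnectedComponent :=
  ConnectedComponent.lift (fun e => (H I).connectedComponentMk (vert h2 e))
    (fun _ _ p _ => vert_const_walk h2 p)

noncomputable def phi (h2 : ∀ e ∈ I, e.card = 2) :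
    (Ge I).ConnectedComponent ⊕ {x : Fin v // x ∉ vtx I} → (H I).ConnectedComponent :=
  Sum.elim (phiL h2) (fun x => (H I).connectedComponentMk x.1)

lemma phi_bij : Function.Bijective (phi h2) := by
  constructor
  · rintro (c | x) (d | y) h
    · refine ConnectedComponent.ind₂ (fun e f h => ?_) c d h
      obtain ⟨w⟩ := ConnectedComponent.exact h
      exact congrArg Sum.inl
        (ConnectedComponent.sound (reach_Ge_aux w e.2 f.2 (vert_mem h2 e) (vert_mem h2 f)))
    · exfalso
      obtain ⟨e, he⟩ := c.exists_rep
      subst he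
      have : (H I).Reachable (vert h2 e) y.1 := ConnectedComponent.exact h
      have := (isolated y.2 this.symm).symm
      exact y.2 (mem_vtx.mpr ⟨e.1, e.2, this ▸ vert_mem h2 e⟩)
    · exfalso
      obtain ⟨e, he⟩ := d.exists_rep
      subst he
      have : (H I).Reachable x.1 (vert h2 e) := ConnectedComponent.exact h
      have := isolated x.2 this
      exact x.2 (mem_vtx.mpr ⟨e.1, e.2, this ▸ vert_mem h2 e⟩)
    · have : (H I).Reachable x.1 y.1 := ConnectedComponent.exact h
      exact congrArg Sum.inr (Subtype.ext (isolated x.2 this))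
  · refine ConnectedComponent.ind (fun u => ?_)
    by_cases hu : u ∈ vtx I
    · obtain ⟨e, he, hue⟩ := mem_vtx.mp hu
      refine ⟨Sum.inl ((Ge I).connectedComponentMk ⟨e, he⟩), ?_⟩
      exact ConnectedComponent.sound (samedge h2 he (vert_mem h2 ⟨e, he⟩) hue)
    · exact ⟨Sum.inr ⟨u, hu⟩, rfl⟩

lemma lemmaA (h2 : ∀ e ∈ I, e.card = 2) : Nat.card (Ge I).ConnectedComponent + (v - (vtx I).card)
    = Nat.card (H I).ConnectedComponent := by
  have hcv : Nat.card {x : Fin v // x ∉ vtx I} = v - (vtx I).card := by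
    rw [Nat.card_eq_fintype_card, Fintype.card_subtype_compl, Fintype.card_fin]
    congr 1
    exact Fintype.card_coe (vtx I)
  rw [← Nat.card_eq_of_bijective _ (phi_bij h2), Nat.card_sum, hcv]
end A

lemma walkW {G G' : SimpleGraph (Fin v)} {a b : Fin v}
    (hnr : ¬ G.Reachable a b)
    (hadj : ∀ x y, G'.Adj x y ↔ G.Adj x y ∨ (x = a ∧ y = b) ∨ (x = b ∧ y = a)) :
    ∀ {x y : Fin v}, G'.Walk x y →
      G.Reachable x y ∨ (G.Reachable x a ∧ G.Reachable b y) ∨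
        (G.Reachable x b ∧ G.Reachable a y)
  | _, _, Walk.nil => Or.inl (Reachable.refl _)
  | x, y, Walk.cons (v := z) h p => by
    rcases (hadj x z).mp h with h' | ⟨rfl, rfl⟩ | ⟨rfl, rfl⟩
    · rcases walkW hnr hadj p with h1 | ⟨h1, h2⟩ | ⟨h1, h2⟩
      · exact Or.inl (h'.reachable.trans h1)
      · exact Or.inr (Or.inl ⟨h'.reachable.trans h1, h2⟩)
      · exact Or.inr (Or.inr ⟨h'.reachable.trans h1, h2⟩)
    · rcases walkW hnr hadj p with h1 | ⟨h1, h2⟩ | ⟨h1, h2⟩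
      · exact Or.inr (Or.inl ⟨Reachable.refl _, h1⟩)
      · exact absurd h1.symm hnr
      · exact Or.inl h2
    · rcases walkW hnr hadj p with h1 | ⟨h1, h2⟩ | ⟨h1, h2⟩
      · exact Or.inr (Or.inr ⟨Reachable.refl _, h1⟩)
      · exact Or.inl h2
      · exact absurd h1 hnr

lemma K1 {G G' : SimpleGraph (Fin v)} {a b : Fin v} (hab : a ≠ b)
    (hnr : ¬ G.Reachable a b)
    (hadj : ∀ x y, G'.Adj x y ↔ G.Adj x y ∨ (x = a ∧ y = b) ∨ (x = b ∧ y = a)) :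
    Nat.card G'.ConnectedComponent + 1 = Nat.card G.ConnectedComponent := by
  classical
  have hle : G ≤ G' := fun x y h => (hadj x y).mpr (Or.inl h)
  set f : G.ConnectedComponent → G'.ConnectedComponent :=
    ConnectedComponent.map (Hom.ofLE hle) with hf
  have fmk : ∀ x : Fin v, f (G.connectedComponentMk x) = G'.connectedComponentMk x :=
    fun x => rfl
  set B := G.connectedComponentMk b with hB
  have hinj : ∀ c d : G.ConnectedComponent, c ≠ B → d ≠ B → f c = f d → c = d := by
    refine ConnectedComponent.ind₂ (fun x y hx hy h => ?_)
    rw [fmk, fmk] at h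
    obtain ⟨w⟩ := ConnectedComponent.exact h
    rcases walkW hnr hadj w with h1 | ⟨h1, h2⟩ | ⟨h1, h2⟩
    · exact ConnectedComponent.sound h1
    · exact absurd (ConnectedComponent.sound h2.symm) hy
    · exact absurd (ConnectedComponent.sound h1) hx
  have hsurj : ∀ c' : G'.ConnectedComponent, ∃ c ≠ B, f c = c' := by
    refine ConnectedComponent.ind (fun u => ?_)
    by_cases hu : G.connectedComponentMk u = B
    · refine ⟨G.connectedComponentMk a, ?_, ?_⟩
      · intro hc
        exact hnr (ConnectedComponent.exact hc)
      · rw [fmk]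
        have h1 : G'.Reachable u b := (ConnectedComponent.exact hu).mono hle
        have h2 : G'.Adj a b := (hadj a b).mpr (Or.inr (Or.inl ⟨rfl, rfl⟩))
        exact ConnectedComponent.sound (h2.reachable.trans h1.symm)
    · exact ⟨G.connectedComponentMk u, hu, rfl⟩
  -- bijection between subtype and CC G'
  have hbij : Function.Bijective (fun c : {c : G.ConnectedComponent // c ≠ B} => f c.1) := by
    constructor
    · rintro ⟨c, hc⟩ ⟨d, hd⟩ h
      exact Subtype.ext (hinj c d hc hd h)
    · intro c'
      obtain ⟨c, hc, h⟩ := hsurj c'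
      exact ⟨⟨c, hc⟩, h⟩
  have hcard : Nat.card {c : G.ConnectedComponent // c ≠ B} = Nat.card G'.ConnectedComponent :=
    Nat.card_eq_of_bijective _ hbij
  have : Finite G.ConnectedComponent := Quot.finite _
  have : Finite G'.ConnectedComponent := Quot.finite _
  have hF := Fintype.ofFinite G.ConnectedComponent
  have h1 : Nat.card {c : G.ConnectedComponent // c ≠ B}
      = Nat.card G.ConnectedComponent - 1 := by
    rw [Nat.card_eq_fintype_card, Nat.card_eq_fintype_card]
    rw [Fintype.card_subtype_compl (p := fun c => c = B), Fintype.card_subtype_eq]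
  have hpos : 1 ≤ Nat.card G.ConnectedComponent := by
    have : Nonempty G.ConnectedComponent := ⟨B⟩
    exact Nat.one_le_iff_ne_zero.mpr (Nat.card_ne_zero.mpr ⟨this, inferInstance⟩)
  omega

section Circ
variable {n : ℕ}

lemma fin_add_one_ne (i : Fin (n+3)) : i + 1 ≠ i := by
  intro h
  have h' : i + 1 = i + 0 := by rw [add_zero]; exact h
  have := add_left_cancel h'
  have h1 : ((1 : Fin (n+3)) : ℕ) = 0 := by rw [this]; rfl
  simp [Fin.val_one] at h1

lemma fin_add_two_ne (i : Fin (n+3)) : i + 1 + 1 ≠ i := by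
  intro h
  rw [add_assoc] at h
  have h' : i + (1 + 1) = i + 0 := by rw [add_zero]; exact h
  have h0 := add_left_cancel h'
  have h2 : ((1 : Fin (n+3)) + 1).val = 2 := by
    rw [Fin.val_add, Fin.val_one]
    apply Nat.mod_eq_of_lt
    omega
  rw [h0] at h2
  simp at h2

lemma c_inj (x : Fin (n+3) → Fin v) (hx : Function.Injective x) : Function.Injective (fun i => ({x i, x (i+1)} : Edge v)) := by
  intro i j h
  rcases pair_eq_pair h with ⟨h1, -⟩ | ⟨h1, h2⟩
  · exact hx h1
  · exfalso
    have hij : i = j + 1 := hx h1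
    have hji : i + 1 = j := hx h2
    rw [hij] at hji
    exact fin_add_two_ne j hji

lemma circuit_of (x : Fin (n+3) → Fin v) (hx : Function.Injective x) :
    IsCircuit (Finset.image (fun i => ({x i, x (i+1)} : Edge v)) Finset.univ) := by
  classical
  set c : Fin (n+3) → Edge v := fun i => ({x i, x (i+1)} : Edge v) with hc
  set C := Finset.image c Finset.univ with hC
  have hmemc : ∀ (y : Fin v) (i), y ∈ c i ↔ y = x i ∨ y = x (i+1) := by
    intro y i; simp [hc]
  have hCmem : ∀ i, c i ∈ C := fun i => Finset.mem_image_of_mem c (Finset.mem_univ i)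
  refine ⟨⟨c 0, hCmem 0⟩, ?_, ?_⟩
  · -- degree 2
    intro y hy
    obtain ⟨e, heC, hye⟩ := mem_vtx.mp hy
    obtain ⟨i, -, rfl⟩ := Finset.mem_image.mp heC
    -- y = x j for some j
    obtain ⟨j, rfl⟩ : ∃ j, y = x j := by
      rcases (hmemc y i).mp hye with h | h
      · exact ⟨i, h⟩
      · exact ⟨i + 1, h⟩
    have hfilter : C.filter (fun e => x j ∈ e) = Finset.image c {j - 1, j} := by
      rw [hC, Finset.filter_image]
      congr 1
      ext i
      simp only [Finset.mem_filter, Finset.mem_univ, true_and, Finset.mem_insert,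
        Finset.mem_singleton, hmemc]
      constructor
      · rintro (h | h)
        · exact Or.inr (hx h).symm
        · refine Or.inl ?_
          have := hx h
          rw [this]
          exact (add_sub_cancel_right i 1).symm
      · rintro (rfl | rfl)
        · refine Or.inr ?_
          congr 1
          rw [sub_add_cancel]
        · exact Or.inl rfl
    rw [hfilter, Finset.card_image_of_injective _ (c_inj x hx), Finset.card_insert_of_notMem,
      Finset.card_singleton]
    simp only [Finset.mem_singleton]
    intro h
    have : j - 1 + 1 = j + 1 := by rw [h]
    rw [sub_add_cancel] at this
    exact fin_add_one_ne j this.symm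
  · -- connectivity
    rw [cl_def, Nat.card_eq_one_iff_unique]
    set el : Fin (n+3) → {e // e ∈ C} := fun i => ⟨c i, hCmem i⟩ with hel
    have hadj : ∀ i, (Ge C).Adj (el i) (el (i+1)) := by
      intro i
      refine adj_Ge.mpr ⟨?_, Finset.not_disjoint_iff.mpr ⟨x (i+1), ?_, ?_⟩⟩
      · intro h
        exact fin_add_one_ne i (c_inj x hx (congrArg Subtype.val h)).symm
      · exact (hmemc _ i).mpr (Or.inr rfl)
      · exact (hmemc _ (i+1)).mpr (Or.inl rfl)
    have key : ∀ k : ℕ, ∀ (h : k < n + 3),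
        (Ge C).Reachable (el 0) (el ⟨k, h⟩) := by
      intro k
      induction k with
      | zero => intro h; exact Reachable.refl _
      | succ m ih =>
        intro h
        have hm : m < n + 3 := Nat.lt_of_succ_lt h
        have : (⟨m, hm⟩ : Fin (n+3)) + 1 = ⟨m+1, h⟩ := by
          apply Fin.ext
          rw [Fin.val_add, Fin.val_one]
          simp [Nat.mod_eq_of_lt h, Nat.mod_eq_of_lt hm]
        exact (ih hm).trans (this ▸ (hadj ⟨m, hm⟩).reachable)
    have hreach : ∀ u : {e // e ∈ C}, (Ge C).Reachable (el 0) u := by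
      rintro ⟨e, he⟩
      obtain ⟨i, -, rfl⟩ := Finset.mem_image.mp he
      exact key i.val i.isLt
    constructor
    · constructor
      refine ConnectedComponent.ind₂ (fun u w => ?_)
      exact ConnectedComponent.sound ((hreach u).symm.trans (hreach w))
    · exact ⟨(Ge C).connectedComponentMk (el 0)⟩
end Circ

lemma path_getVert_inj {G : SimpleGraph (Fin v)} :
    ∀ {a b : Fin v} (p : G.Walk a b), p.IsPath →
      ∀ i j, i ≤ p.length → j ≤ p.length → p.getVert i = p.getVert j → i = j
  | _, _, Walk.nil, _, i, j, hi, hj, _ => by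
    simp only [Walk.length_nil, Nat.le_zero] at hi hj
    omega
  | a, b, Walk.cons hadj q, hp, i, j, hi, hj, h => by
    rw [Walk.cons_isPath_iff] at hp
    match i, j with
    | 0, 0 => rfl
    | 0, j+1 =>
      exfalso
      rw [Walk.getVert_zero, Walk.getVert_cons_succ] at h
      exact hp.2 (Walk.mem_support_iff_exists_getVert.mpr
        ⟨j, h.symm, by simpa [Walk.length_cons] using hj⟩)
    | i+1, 0 =>
      exfalso
      rw [Walk.getVert_zero, Walk.getVert_cons_succ] at h
      exact hp.2 (Walk.mem_support_iff_exists_getVert.mpr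
        ⟨i, h, by simpa [Walk.length_cons] using hi⟩)
    | i+1, j+1 =>
      rw [Walk.getVert_cons_succ, Walk.getVert_cons_succ] at h
      have := path_getVert_inj q hp.1 i j (by simpa [Walk.length_cons] using hi)
        (by simpa [Walk.length_cons] using hj) h
      omega

lemma exists_circuit {I : Finset (Edge v)} {e : Edge v} (he : e ∈ I)
    {a b : Fin v} (hab : a ≠ b) (he2 : e = {a, b})
    (hr : (H (I.erase e)).Reachable a b) : ∃ C ⊆ I, IsCircuit C := by
  classical
  obtain ⟨w⟩ := hr
  set J := I.erase e with hJ
  set p : (H J).Walk a b := w.toPath.1 with hp'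
  have hp : p.IsPath := w.toPath.2
  have hk0 : p.length ≠ 0 := fun h => hab (Walk.eq_of_length_eq_zero h)
  have hk1 : p.length ≠ 1 := by
    intro h
    have hadj : (H J).Adj (p.getVert 0) (p.getVert 1) := p.adj_getVert_succ (by omega)
    rw [Walk.getVert_zero] at hadj
    have h1 : p.getVert 1 = b := by rw [← h]; exact p.getVert_length
    rw [h1] at hadj
    have := (adj_H.mp hadj).2
    rw [← he2] at this
    exact (Finset.mem_erase.mp this).1 rfl
  obtain ⟨n, hn⟩ : ∃ n, p.length = n + 2 := ⟨p.length - 2, by omega⟩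
  set x : Fin (n+3) → Fin v := fun i => p.getVert i.val with hx'
  have hx : Function.Injective x := by
    intro i j h
    have hi := i.isLt
    have hj := j.isLt
    exact Fin.ext (path_getVert_inj p hp i.val j.val (by omega) (by omega) h)
  refine ⟨Finset.image (fun i => ({x i, x (i+1)} : Edge v)) Finset.univ, ?_, circuit_of x hx⟩
  intro f hf
  obtain ⟨i, -, rfl⟩ := Finset.mem_image.mp hf
  have hi := i.isLt
  rcases lt_or_eq_of_le (Nat.lt_succ_iff.mp (by omega : i.val < p.length + 1)) with hlt | heq
  · -- a path edge
    have hv1 : (i + 1).val = i.val + 1 := by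
      rw [Fin.val_add, Fin.val_one]
      exact Nat.mod_eq_of_lt (by omega)
    have hadj : (H J).Adj (p.getVert i.val) (p.getVert (i.val + 1)) :=
      p.adj_getVert_succ hlt
    have hmem := (adj_H.mp hadj).2
    have : ({x i, x (i+1)} : Edge v) ∈ J := by
      rw [hx', ] at *
      simpa [hv1] using hmem
    exact Finset.mem_of_mem_erase (hJ ▸ this)
  · -- the wrap-around edge is e
    have hv0 : (i + 1).val = 0 := by
      rw [Fin.val_add, Fin.val_one, heq]
      simp [hn]
    have hxa : x (i + 1) = a := by
      show p.getVert (i+1).val = a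
      rw [hv0]
      exact p.getVert_zero
    have hxb : x i = b := by
      show p.getVert i.val = b
      rw [heq]
      exact p.getVert_length
    have : ({x i, x (i+1)} : Edge v) = e := by
      rw [hxa, hxb, he2, Finset.pair_comm]
    rwa [this]


lemma Hbot : H (∅ : Finset (Edge v)) = ⊥ := by
  ext x y
  simp [adj_H]

lemma Nbot : Nat.card (H (∅ : Finset (Edge v))).ConnectedComponent = v := by
  rw [Hbot]
  have hbij : Function.Bijective ((⊥ : SimpleGraph (Fin v)).connectedComponentMk) := by
    constructor
    · intro x y h
      exact reachable_bot.mp (ConnectedComponent.exact h)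
    · exact ConnectedComponent.ind fun u => ⟨u, rfl⟩
  rw [← Nat.card_eq_of_bijective _ hbij, Nat.card_eq_fintype_card, Fintype.card_fin]

lemma mainM : ∀ (I : Finset (Edge v)), (∀ e ∈ I, e.card = 2) →
    (∀ C ⊆ I, ¬ IsCircuit C) → Nat.card (H I).ConnectedComponent + I.card = v := by
  intro I
  induction I using Finset.strongInduction with
  | _ I ih =>
    intro h2 hnc
    rcases I.eq_empty_or_nonempty with rfl | ⟨e, he⟩
    · rw [Finset.card_empty, Nat.add_zero]
      exact Nbot
    · obtain ⟨a, b, hab, he2⟩ := Finset.card_eq_two.mp (h2 e he)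
      have hJlt : I.erase e ⊂ I := Finset.erase_ssubset he
      have hJsub : I.erase e ⊆ I := Finset.erase_subset _ _
      have hadj : ∀ x y, (H I).Adj x y ↔
          (H (I.erase e)).Adj x y ∨ (x = a ∧ y = b) ∨ (x = b ∧ y = a) := by
        intro x y
        rw [adj_H, adj_H]
        constructor
        · rintro ⟨hxy, hmem⟩
          by_cases hxe : ({x, y} : Finset (Fin v)) = e
          · rw [he2] at hxe
            rcases pair_eq_pair hxe with ⟨h1, h2'⟩ | ⟨h1, h2'⟩
            · exact Or.inr (Or.inl ⟨h1, h2'⟩)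
            · exact Or.inr (Or.inr ⟨h1, h2'⟩)
          · exact Or.inl ⟨hxy, Finset.mem_erase.mpr ⟨hxe, hmem⟩⟩
        · rintro (⟨hxy, hmem⟩ | ⟨rfl, rfl⟩ | ⟨rfl, rfl⟩)
          · exact ⟨hxy, Finset.mem_of_mem_erase hmem⟩
          · exact ⟨hab, he2 ▸ he⟩
          · exact ⟨hab.symm, by rw [Finset.pair_comm]; exact he2 ▸ he⟩
      have hnr : ¬ (H (I.erase e)).Reachable a b := by
        intro hr
        obtain ⟨C, hCI, hC⟩ := exists_circuit he hab he2 hr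
        exact hnc C hCI hC
      have hK := K1 hab hnr hadj
      have hIH := ih (I.erase e) hJlt (fun f hf => h2 f (hJsub hf))
        (fun C hC => hnc C (hC.trans hJsub))
      have hcard : (I.erase e).card + 1 = I.card := Finset.card_erase_add_one he
      omega

lemma nbc_noCircuit {Gs : Finset (Edge v)} {ord : Edge v → ℕ}
    (hord : Function.Injective ord) {I : Finset (Edge v)} (hIG : I ⊆ Gs)
    (hnbc : ¬ HasBrokenCircuit Gs ord I) : ∀ C ⊆ I, ¬ IsCircuit C := by
  intro C hCI hC
  obtain ⟨b, hbC, hmax⟩ := Finset.exists_max_image C ord hC.1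
  exact hnbc ⟨b, hIG (hCI hbC), C,
    fun f hf => Finset.mem_insert.mpr (Or.inr (hCI hf)), hC, hbC,
    fun f hf hne => lt_of_le_of_ne (hmax f hf) (fun h => hne (hord h))⟩

end Aux

theorem cl_erase_of_nbc
    (G : Finset (Edge v)) (hG : ∀ e ∈ G, e.card = 2)
    (ord : Edge v → ℕ) (hord : Function.Injective ord)  -- a fixed monomial order
    (I : Finset (Edge v)) (hIG : I ⊆ G)
    (hnbc : ¬ HasBrokenCircuit G ord I)
    (m : Edge v) (hm : m ∈ I)
    (hlcm : vtx (I.erase m) = vtx I) :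
    cl I = cl (I.erase m) - 1 := by
  have h2I : ∀ e ∈ I, e.card = 2 := fun e he => hG e (hIG he)
  have h2J : ∀ e ∈ I.erase m, e.card = 2 := fun e he => h2I e (Finset.mem_of_mem_erase he)
  have hnc : ∀ C ⊆ I, ¬ IsCircuit C := nbc_noCircuit hord hIG hnbc
  have hncJ : ∀ C ⊆ I.erase m, ¬ IsCircuit C :=
    fun C hC => hnc C (hC.trans (Finset.erase_subset _ _))
  have hM1 := mainM I h2I hnc
  have hM2 := mainM (I.erase m) h2J hncJ
  have hA1 := lemmaA h2I
  have hA2 := lemmaA h2J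
  rw [hlcm] at hA2
  rw [← cl_def] at hA1 hA2
  have hcard : (I.erase m).card + 1 = I.card := Finset.card_erase_add_one hm
  omega
end

section
/- Let 𝔞 be a monomial ideal generated in degree two by squarefree monomials, and let β_i denote the i-th Betti number of 𝔞 over S (the rank of the i-th module in a minimal free resolution of 𝔞). Let nbc_i be the number of nbc-sets of cardinality i-1 (with respect to a fixed monomial order). Then β_i ≤ nbc_i. -/
/-!
STATEMENT 4: Let `𝔞 ⊆ S = k[x_1,…,x_v]` be an ideal generated by squarefree
quadratic monomials (encoded as edges of a graph on `Fin v`).  The Betti numbers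
of `𝔞` (ranks of the modules of a minimal free resolution of `𝔞` over `S`, where
the `i`-th module surjects onto the `(i+1)`-st Taylor strand) are bounded by the
number of nbc-sets of the corresponding cardinality: the rank of the `i`-th
module of the resolution of the module `𝔞` is at most the number of nbc-subsets
of the generators of cardinality `i + 1`.
-/

open MvPolynomial

variable {v : ℕ}

/-- The number of nbc-sets of cardinality `j`. -/
noncomputable def nbcCount (G : Finset (Edge v)) (ord : Edge v → ℕ) (j : ℕ) : ℕ :=
  Nat.card {I : Finset (Edge v) // I ⊆ G ∧ ¬ HasBrokenCircuit G ord I ∧ I.card = j}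

/-- The squarefree monomial attached to an edge. -/
noncomputable def edgeMon (k : Type) [Field k] (e : Edge v) : MvPolynomial (Fin v) k :=
  monomial (∑ i ∈ e, Finsupp.single i 1) 1

section Comb

variable {v : ℕ} {G : Finset (Edge v)} {ord : Edge v → ℕ}

lemma hbc_mono {I J : Finset (Edge v)} (hIJ : I ⊆ J)
    (h : HasBrokenCircuit G ord I) : HasBrokenCircuit G ord J := by
  obtain ⟨e, he, C, hC, hcirc, heC, hmax⟩ := h
  exact ⟨e, he, C, hC.trans (Finset.insert_subset_insert e hIJ), hcirc, heC, hmax⟩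

lemma nbc_subset {I J : Finset (Edge v)} (hIJ : I ⊆ J)
    (h : ¬ HasBrokenCircuit G ord J) : ¬ HasBrokenCircuit G ord I :=
  fun hI => h (hbc_mono hIJ hI)

lemma edge_subset_vtx {C : Finset (Edge v)} {e : Edge v} (he : e ∈ C) : e ⊆ vtx C :=
  Finset.le_sup (f := id) he

/-- In a circuit, every vertex of an edge of the circuit lies in another edge. -/
lemma circuit_other_edge {C : Finset (Edge v)} (hC : IsCircuit C) {e : Edge v}
    (he : e ∈ C) {x : Fin v} (hx : x ∈ e) : ∃ g ∈ C, g ≠ e ∧ x ∈ g := by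
  have hxv : x ∈ vtx C := edge_subset_vtx he hx
  have h2 := hC.2.1 x hxv
  have h1 : 1 < (C.filter (fun f => x ∈ f)).card := by omega
  obtain ⟨g, hg, hge⟩ := Finset.exists_mem_ne h1 e
  rw [Finset.mem_filter] at hg
  exact ⟨g, hg.1, hge, hg.2⟩

/-- No circuit has cardinality ≤ 2 when its members are distinct nonempty sets
(we only need: circuits inside a two-element set containing a `G`-edge are impossible). -/
lemma not_hbc_empty (hG : ∀ e ∈ G, e.card = 2) : ¬ HasBrokenCircuit G ord (∅ : Finset (Edge v)) := by
  rintro ⟨e, he, C, hC, hcirc, heC, -⟩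
  -- C ⊆ {e}, so C = {e}
  have hCe : C = {e} := by
    apply Finset.Subset.antisymm
    · simpa using hC
    · simpa using heC
  subst hCe
  have hecard := hG e he
  have : e.Nonempty := Finset.card_pos.mp (by omega)
  obtain ⟨x, hx⟩ := this
  obtain ⟨g, hg, hge, -⟩ := circuit_other_edge hcirc (Finset.mem_singleton_self e) hx
  simp only [Finset.mem_singleton] at hg
  exact hge hg

lemma not_hbc_singleton (hG : ∀ e ∈ G, e.card = 2) {e' : Edge v} (he' : e' ∈ G) :
    ¬ HasBrokenCircuit G ord {e'} := by
  rintro ⟨e, he, C, hC, hcirc, heC, hmax⟩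
  -- every edge of C equals e or e'
  have hmem : ∀ f ∈ C, f = e ∨ f = e' := by
    intro f hf
    have := hC hf
    simpa [Finset.mem_insert] using this
  -- e has a vertex; that vertex is in another edge g ∈ C, g ≠ e, so g = e'
  have hecard := hG e he
  have hene : e.Nonempty := Finset.card_pos.mp (by omega)
  -- show e' ∈ C and e ≠ e', then show e ⊆ e' and e' ⊆ e
  have hsub : ∀ f ∈ C, f ⊆ e ∩ e' ∨ (e = e') := by
    intro f hf
    by_cases hee' : e = e'
    · exact Or.inr hee'
    · left
      intro x hx
      obtain ⟨g, hg, hge, hxg⟩ := circuit_other_edge hcirc hf hx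
      rcases hmem f hf with rfl | rfl
      · -- f = e, g must be e'
        rcases hmem g hg with rfl | rfl
        · exact absurd rfl hge
        · exact Finset.mem_inter.mpr ⟨hx, hxg⟩
      · -- f = e', g must be e
        rcases hmem g hg with rfl | rfl
        · exact Finset.mem_inter.mpr ⟨hxg, hx⟩
        · exact absurd rfl hge
  by_cases hee' : e = e'
  · -- then C ⊆ {e}, circuit on a single doubleton edge: impossible
    subst hee'
    obtain ⟨x, hx⟩ := hene
    obtain ⟨g, hg, hge, -⟩ := circuit_other_edge hcirc heC hx
    rcases hmem g hg with rfl | rfl <;> exact hge rfl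
  · obtain ⟨x, hx⟩ := hene
    have := hsub e heC
    rcases this with hs | hs
    · have hxe' : x ∈ e' := (Finset.mem_inter.mp (hs hx)).2
      -- also e' ⊆ e ∩ e' gives e' ⊆ e; combined e = e'? e ⊆ e' needs all of e
      have hee : e ⊆ e' := fun y hy => (Finset.mem_inter.mp (hs hy)).2
      -- e' ∈ C?
      have he'C : e' ∈ C := by
        obtain ⟨g, hg, hge, hxg⟩ := circuit_other_edge hcirc heC hx
        rcases hmem g hg with rfl | rfl
        · exact absurd rfl hge
        · exact hg
      have hs' := hsub e' he'C
      rcases hs' with hs' | hs'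
      · have he'e : e' ⊆ e := fun y hy => (Finset.mem_inter.mp (hs' hy)).1
        exact hee' (Finset.Subset.antisymm hee he'e)
      · exact hee' hs'
    · exact hee' hs

/-- Key cone lemma: adding the `ord`-largest edge of `G` contained in `W`
to an nbc set whose edges lie in `W` stays nbc. -/
lemma cone_nbc {I : Finset (Edge v)} {W : Finset (Fin v)} {a : Edge v}
    (hInbc : ¬ HasBrokenCircuit G ord I) (hIW : ∀ g ∈ I, g ⊆ W)
    (haG : a ∈ G) (haW : a ⊆ W) (hamax : ∀ e ∈ G, e ⊆ W → ord e ≤ ord a)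
    (hord : Function.Injective ord) :
    ¬ HasBrokenCircuit G ord (insert a I) := by
  rintro ⟨e, he, C, hC, hcirc, heC, hmax⟩
  -- Step 1 : every edge of C is contained in W
  have hCW : ∀ f ∈ C, f ⊆ W := by
    intro f hf
    by_cases hfe : f = e
    · subst hfe
      intro x hx
      obtain ⟨g, hg, hge, hxg⟩ := circuit_other_edge hcirc hf hx
      have hgmem : g ∈ insert a I := by
        have := hC hg
        rw [Finset.mem_insert] at this
        rcases this with h | h
        · exact absurd h hge
        · exact h
      rw [Finset.mem_insert] at hgmem
      rcases hgmem with rfl | h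
      · exact haW hxg
      · exact hIW g h hxg
    · have := hC hf
      rw [Finset.mem_insert] at this
      rcases this with h | h
      · exact absurd h hfe
      · rw [Finset.mem_insert] at h
        rcases h with rfl | h
        · exact haW
        · exact hIW f h
  have heW : e ⊆ W := hCW e heC
  have hea : ord e ≤ ord a := hamax e he heW
  by_cases haC : a ∈ C
  · by_cases hae : a = e
    · -- C ⊆ insert a I = insert e I...  then I has a broken circuit with witness a
      subst hae
      have hCsub : C ⊆ insert a I := by
        intro f hf
        have := hC hf
        rw [Finset.mem_insert] at this
        rcases this with rfl | h
        · exact Finset.mem_insert_self _ _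
        · exact h
      exact hInbc ⟨a, he, C, hCsub, hcirc, haC, hmax⟩
    · have := hmax a haC hae
      omega
  · -- a ∉ C : C ⊆ insert e I
    have hCsub : C ⊆ insert e I := by
      intro f hf
      have := hC hf
      rw [Finset.mem_insert] at this
      rcases this with rfl | h
      · exact Finset.mem_insert_self _ _
      · rw [Finset.mem_insert] at h
        rcases h with rfl | h
        · exact absurd hf haC
        · exact Finset.mem_insert_of_mem h
    exact hInbc ⟨e, he, C, hCsub, hcirc, heC, hmax⟩

end Comb
noncomputable section Alg

attribute [local instance] Classical.propDecidable

variable {v : ℕ} (k : Type) [Field k] (G : Finset (Edge v)) (ord : Edge v → ℕ)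

/-- indicator multidegree of a vertex set -/
def chi (s : Finset (Fin v)) : Fin v →₀ ℕ := ∑ i ∈ s, Finsupp.single i 1

lemma chi_apply (s : Finset (Fin v)) (i : Fin v) : chi s i = if i ∈ s then 1 else 0 := by
  classical
  rw [chi, Finsupp.finset_sum_apply]
  by_cases h : i ∈ s
  · rw [Finset.sum_eq_single i]
    · simp [h]
    · intro b _ hb; simp [Finsupp.single_apply, hb]
    · intro hi; exact absurd h hi
  · rw [Finset.sum_eq_zero, if_neg h]
    intro b hb
    have : b ≠ i := fun hbi => h (hbi ▸ hb)
    simp [Finsupp.single_apply, this]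

lemma chi_mono {s t : Finset (Fin v)} (h : s ⊆ t) : chi s ≤ chi t := by
  intro i
  rw [chi_apply, chi_apply]
  by_cases hi : i ∈ s
  · simp [hi, h hi]
  · simp [hi]

/-- the set of nbc sets of cardinality j -/
def Lam (j : ℕ) : Type :=
  {I : Finset (Edge v) // I ⊆ G ∧ ¬ HasBrokenCircuit G ord I ∧ I.card = j}

instance (j : ℕ) : Fintype (Lam G ord j) := by
  unfold Lam; infer_instance

local notation "R" => MvPolynomial (Fin v) k

/-- sign of removing `e` from `I` -/
def mysign (e : Edge v) (I : Finset (Edge v)) : R :=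
  (-1 : R) ^ (I.filter (fun f => ord f < ord e)).card

/-- the unique element of `I \ K` (when it is a singleton) -/
def dElt (K I : Finset (Edge v)) : Edge v := (I \ K).sup id

/-- matrix entry of the nbc (Lyubeznik) complex -/
def MM (K I : Finset (Edge v)) : R :=
  if K ⊆ I then mysign k ord (dElt K I) I * monomial (chi (vtx I) - chi (vtx K)) (1 : k)
  else 0

/-- the differential of the nbc complex -/
def DD (j : ℕ) : ((Lam G ord (j+1)) → R) →ₗ[R] ((Lam G ord j) → R) where
  toFun z := fun K => ∑ I : Lam G ord (j+1), MM k ord K.1 I.1 * z I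
  map_add' z w := by
    funext K
    simp [Pi.add_apply, mul_add, Finset.sum_add_distrib]
  map_smul' r z := by
    funext K
    simp only [Pi.smul_apply, smul_eq_mul, RingHom.id_apply, Finset.mul_sum]
    exact Finset.sum_congr rfl fun I _ => by ring

lemma DD_apply (j : ℕ) (z : (Lam G ord (j+1)) → R) (K : Lam G ord j) :
    DD k G ord j z K = ∑ I : Lam G ord (j+1), MM k ord K.1 I.1 * z I := rfl

lemma DD_single (j : ℕ) (I : Lam G ord (j+1)) (p : R) (K : Lam G ord j) :
    DD k G ord j (Pi.single I p) K = MM k ord K.1 I.1 * p := by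
  rw [DD_apply, Finset.sum_eq_single I]
  · rw [Pi.single_eq_same]
  · intro b _ hb; rw [Pi.single_eq_of_ne hb, mul_zero]
  · intro h; exact absurd (Finset.mem_univ I) h

/-- difference singleton description -/
lemma sdiff_singleton_of_card {K I : Finset (Edge v)} (hKI : K ⊆ I)
    (hc : K.card + 1 = I.card) : ∃ e, e ∈ I ∧ e ∉ K ∧ I \ K = {e} ∧ I = insert e K := by
  have hcd : (I \ K).card = 1 := by
    rw [Finset.card_sdiff_of_subset hKI]; omega
  obtain ⟨e, he⟩ := Finset.card_eq_one.mp hcd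
  have heI : e ∈ I ∧ e ∉ K := by
    have : e ∈ I \ K := he ▸ Finset.mem_singleton_self e
    exact ⟨(Finset.mem_sdiff.mp this).1, (Finset.mem_sdiff.mp this).2⟩
  refine ⟨e, heI.1, heI.2, he, ?_⟩
  apply Finset.Subset.antisymm
  · intro x hx
    by_cases hxK : x ∈ K
    · exact Finset.mem_insert_of_mem hxK
    · have : x ∈ I \ K := Finset.mem_sdiff.mpr ⟨hx, hxK⟩
      rw [he, Finset.mem_singleton] at this
      exact this ▸ Finset.mem_insert_self x K
  · exact Finset.insert_subset heI.1 hKI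

lemma dElt_eq {K I : Finset (Edge v)} {e : Edge v} (h : I \ K = {e}) : dElt K I = e := by
  rw [dElt, h, Finset.sup_singleton, id]

lemma mysign_mul_self (e : Edge v) (I : Finset (Edge v)) :
    mysign k ord e I * mysign k ord e I = 1 := by
  rw [mysign, ← pow_add, ← two_mul, pow_mul]
  norm_num

/-- sign cancellation -/
lemma sign_swap (hord : Function.Injective ord) {e f : Edge v} {I : Finset (Edge v)}
    (he : e ∈ I) (hf : f ∈ I) (hef : e ≠ f) :
    mysign k ord e (I \ {f}) * mysign k ord f I
      + mysign k ord f (I \ {e}) * mysign k ord e I = 0 := by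
  classical
  -- wlog ord e < ord f
  have key : ∀ e f : Edge v, e ∈ I → f ∈ I → ord e < ord f →
      mysign k ord e (I \ {f}) * mysign k ord f I
        + mysign k ord f (I \ {e}) * mysign k ord e I = 0 := by
    intro e f he hf hlt
    have h1 : (I \ {f}).filter (fun g => ord g < ord e)
        = I.filter (fun g => ord g < ord e) := by
      ext g
      simp only [Finset.mem_filter, Finset.mem_sdiff, Finset.mem_singleton]
      constructor
      · rintro ⟨⟨hg, -⟩, hg2⟩; exact ⟨hg, hg2⟩
      · rintro ⟨hg, hg2⟩
        refine ⟨⟨hg, fun hgf => ?_⟩, hg2⟩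
        subst hgf; omega
    have h2 : (I \ {e}).filter (fun g => ord g < ord f)
        = (I.filter (fun g => ord g < ord f)).erase e := by
      ext g
      simp only [Finset.mem_filter, Finset.mem_sdiff, Finset.mem_singleton,
        Finset.mem_erase]
      tauto
    have heIf : e ∈ I.filter (fun g => ord g < ord f) := Finset.mem_filter.mpr ⟨he, hlt⟩
    have h3 : ((I.filter (fun g => ord g < ord f)).erase e).card + 1
        = (I.filter (fun g => ord g < ord f)).card := by
      rw [Finset.card_erase_of_mem heIf]
      have : 0 < (I.filter (fun g => ord g < ord f)).card := Finset.card_pos.mpr ⟨e, heIf⟩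
      omega
    rw [mysign, mysign, mysign, mysign, h1, h2]
    set A := (I.filter (fun g => ord g < ord e)).card
    set B := (I.filter (fun g => ord g < ord f)).card
    set B' := ((I.filter (fun g => ord g < ord f)).erase e).card
    have : (B : ℕ) = B' + 1 := h3.symm
    rw [this, pow_succ]
    ring
  rcases Nat.lt_trichotomy (ord e) (ord f) with h | h | h
  · exact key e f he hf h
  · exact absurd (hord h) hef
  · rw [add_comm]; exact key f e hf he h

end Alg
noncomputable section Alg2

attribute [local instance] Classical.propDecidable

variable {v : ℕ} (k : Type) [Field k] (G : Finset (Edge v)) (ord : Edge v → ℕ)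

local notation "R" => MvPolynomial (Fin v) k

lemma vtx_mono {K I : Finset (Edge v)} (h : K ⊆ I) : vtx K ⊆ vtx I :=
  Finset.le_iff_subset.mp (Finset.sup_mono h)

lemma MM_pos {K I : Finset (Edge v)} (h : K ⊆ I) :
    MM k ord K I = mysign k ord (dElt K I) I * monomial (chi (vtx I) - chi (vtx K)) (1 : k) := by
  rw [MM, if_pos h]

lemma MM_neg {K I : Finset (Edge v)} (h : ¬ K ⊆ I) : MM k ord K I = 0 := by
  rw [MM, if_neg h]

lemma mon_tsub_mul {A B C : Finset (Fin v)} (hAB : A ⊆ B) (hBC : B ⊆ C) :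
    monomial (chi C - chi B) (1 : k) * monomial (chi B - chi A) (1 : k)
      = monomial (chi C - chi A) (1 : k) := by
  have hexp : chi C - chi B + (chi B - chi A) = chi C - chi A := by
    ext i
    have hab : chi A i ≤ chi B i := chi_mono hAB i
    have hbc : chi B i ≤ chi C i := chi_mono hBC i
    rw [Finsupp.add_apply, Finsupp.tsub_apply, Finsupp.tsub_apply, Finsupp.tsub_apply]
    omega
  rw [monomial_mul, one_mul, hexp]

/-- build an element of `Lam` from a subset of an nbc set -/
def LamOf {j j' : ℕ} (I : Lam G ord j') (J : Finset (Edge v)) (hJ : J ⊆ I.1)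
    (hc : J.card = j) : Lam G ord j :=
  ⟨J, hJ.trans I.2.1, nbc_subset hJ I.2.2.1, hc⟩

lemma MM_mul_sum (hord : Function.Injective ord) (j : ℕ)
    (K : Lam G ord j) (I : Lam G ord (j+2)) :
    ∑ J : Lam G ord (j+1), MM k ord K.1 J.1 * MM k ord J.1 I.1 = 0 := by
  classical
  by_cases hKI : K.1 ⊆ I.1
  · -- I \ K has two elements e ≠ f
    have hcd : (I.1 \ K.1).card = 2 := by
      rw [Finset.card_sdiff_of_subset hKI, I.2.2.2, K.2.2.2]
      omega
    obtain ⟨e, f, hef, hdiff⟩ := Finset.card_eq_two.mp hcd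
    have heI : e ∈ I.1 ∧ e ∉ K.1 := by
      have : e ∈ I.1 \ K.1 := by rw [hdiff]; simp
      exact Finset.mem_sdiff.mp this
    have hfI : f ∈ I.1 ∧ f ∉ K.1 := by
      have : f ∈ I.1 \ K.1 := by rw [hdiff]; simp
      exact Finset.mem_sdiff.mp this
    -- the two middle sets
    set J1 : Finset (Edge v) := I.1 \ {f} with hJ1
    set J2 : Finset (Edge v) := I.1 \ {e} with hJ2
    have hJ1I : J1 ⊆ I.1 := Finset.sdiff_subset
    have hJ2I : J2 ⊆ I.1 := Finset.sdiff_subset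
    have hJ1c : J1.card = j + 1 := by
      rw [hJ1, Finset.card_sdiff_of_subset (by simpa using hfI.1), I.2.2.2]
      simp
    have hJ2c : J2.card = j + 1 := by
      rw [hJ2, Finset.card_sdiff_of_subset (by simpa using heI.1), I.2.2.2]
      simp
    have heJ1 : e ∈ J1 := Finset.mem_sdiff.mpr ⟨heI.1, by simpa using hef⟩
    have hfJ2 : f ∈ J2 := Finset.mem_sdiff.mpr ⟨hfI.1, by simp; exact fun h => hef h.symm⟩
    have hKJ1 : K.1 ⊆ J1 := by
      intro x hx
      refine Finset.mem_sdiff.mpr ⟨hKI hx, ?_⟩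
      simp only [Finset.mem_singleton]
      rintro rfl; exact hfI.2 hx
    have hKJ2 : K.1 ⊆ J2 := by
      intro x hx
      refine Finset.mem_sdiff.mpr ⟨hKI hx, ?_⟩
      simp only [Finset.mem_singleton]
      rintro rfl; exact heI.2 hx
    have hJ1diffK : J1 \ K.1 = {e} := by
      ext x
      simp only [hJ1, Finset.mem_sdiff, Finset.mem_singleton]
      constructor
      · rintro ⟨⟨hxI, hxf⟩, hxK⟩
        have : x ∈ I.1 \ K.1 := Finset.mem_sdiff.mpr ⟨hxI, hxK⟩
        rw [hdiff] at this
        simp only [Finset.mem_insert, Finset.mem_singleton] at this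
        tauto
      · rintro rfl
        exact ⟨⟨heI.1, by simpa using hef⟩, heI.2⟩
    have hJ2diffK : J2 \ K.1 = {f} := by
      ext x
      simp only [hJ2, Finset.mem_sdiff, Finset.mem_singleton]
      constructor
      · rintro ⟨⟨hxI, hxe⟩, hxK⟩
        have : x ∈ I.1 \ K.1 := Finset.mem_sdiff.mpr ⟨hxI, hxK⟩
        rw [hdiff] at this
        simp only [Finset.mem_insert, Finset.mem_singleton] at this
        tauto
      · rintro rfl
        exact ⟨⟨hfI.1, fun h => hef h.symm⟩, hfI.2⟩
    have hIJ1 : I.1 \ J1 = {f} := by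
      ext x
      simp only [hJ1, Finset.mem_sdiff, Finset.mem_singleton]
      constructor
      · rintro ⟨hxI, h⟩
        by_contra hne
        exact h ⟨hxI, hne⟩
      · rintro rfl
        exact ⟨hfI.1, fun hc => hc.2 rfl⟩
    have hIJ2 : I.1 \ J2 = {e} := by
      ext x
      simp only [hJ2, Finset.mem_sdiff, Finset.mem_singleton]
      constructor
      · rintro ⟨hxI, h⟩
        by_contra hne
        exact h ⟨hxI, hne⟩
      · rintro rfl
        exact ⟨heI.1, fun hc => hc.2 rfl⟩
    set JJ1 : Lam G ord (j+1) := LamOf G ord I J1 hJ1I hJ1c with hJJ1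
    set JJ2 : Lam G ord (j+1) := LamOf G ord I J2 hJ2I hJ2c with hJJ2
    have hne : JJ1 ≠ JJ2 := by
      intro h
      have : J1 = J2 := congrArg Subtype.val h
      rw [hJ1, hJ2] at this
      have he1 : e ∈ I.1 \ {e} := this ▸ heJ1
      simp at he1
    have hvanish : ∀ J : Lam G ord (j+1), J ≠ JJ1 → J ≠ JJ2 →
        MM k ord K.1 J.1 * MM k ord J.1 I.1 = 0 := by
      intro J hJne1 hJne2
      by_cases h1 : K.1 ⊆ J.1
      · by_cases h2 : J.1 ⊆ I.1
        · -- J = insert x K with x ∈ I \ K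
          exfalso
          obtain ⟨x, hxJ, hxK, hJK, hJx⟩ := sdiff_singleton_of_card h1
            (by rw [K.2.2.2, J.2.2.2])
          have hxI : x ∈ I.1 \ K.1 := Finset.mem_sdiff.mpr ⟨h2 hxJ, hxK⟩
          rw [hdiff] at hxI
          simp only [Finset.mem_insert, Finset.mem_singleton] at hxI
          -- J.1 = insert x K.1 ; show J.1 = J1 or J2
          have hJcard := J.2.2.2
          rcases hxI with rfl | rfl
          · apply hJne1
            apply Subtype.ext
            show J.1 = J1
            apply Finset.eq_of_subset_of_card_le
            · rw [hJx]
              exact Finset.insert_subset heJ1 hKJ1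
            · rw [hJ1c, hJcard]
          · apply hJne2
            apply Subtype.ext
            show J.1 = J2
            apply Finset.eq_of_subset_of_card_le
            · rw [hJx]
              exact Finset.insert_subset hfJ2 hKJ2
            · rw [hJ2c, hJcard]
        · rw [MM_neg k ord h2, mul_zero]
      · rw [MM_neg k ord h1, zero_mul]
    rw [← Finset.sum_subset (Finset.subset_univ {JJ1, JJ2})
      (fun J _ hJ => hvanish J (fun h => hJ (by simp [h])) (fun h => hJ (by simp [h])))]
    rw [Finset.sum_pair hne]
    show MM k ord K.1 J1 * MM k ord J1 I.1 + MM k ord K.1 J2 * MM k ord J2 I.1 = 0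
    rw [MM_pos k ord hKJ1, MM_pos k ord hKJ2, MM_pos k ord hJ1I, MM_pos k ord hJ2I,
      dElt_eq hJ1diffK, dElt_eq hIJ1, dElt_eq hJ2diffK, dElt_eq hIJ2]
    have hm1 : monomial (chi (vtx I.1) - chi (vtx J1)) (1:k)
        * monomial (chi (vtx J1) - chi (vtx K.1)) (1:k)
        = monomial (chi (vtx I.1) - chi (vtx K.1)) (1:k) :=
      mon_tsub_mul k (vtx_mono hKJ1) (vtx_mono hJ1I)
    have hm2 : monomial (chi (vtx I.1) - chi (vtx J2)) (1:k)
        * monomial (chi (vtx J2) - chi (vtx K.1)) (1:k)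
        = monomial (chi (vtx I.1) - chi (vtx K.1)) (1:k) :=
      mon_tsub_mul k (vtx_mono hKJ2) (vtx_mono hJ2I)
    have hsw := sign_swap k ord hord heI.1 hfI.1 hef
    rw [← hJ1, ← hJ2] at hsw
    calc mysign k ord e J1 * monomial (chi (vtx J1) - chi (vtx K.1)) (1:k)
          * (mysign k ord f I.1 * monomial (chi (vtx I.1) - chi (vtx J1)) (1:k))
        + mysign k ord f J2 * monomial (chi (vtx J2) - chi (vtx K.1)) (1:k)
          * (mysign k ord e I.1 * monomial (chi (vtx I.1) - chi (vtx J2)) (1:k))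
        = (mysign k ord e J1 * mysign k ord f I.1)
            * (monomial (chi (vtx I.1) - chi (vtx J1)) (1:k)
               * monomial (chi (vtx J1) - chi (vtx K.1)) (1:k))
          + (mysign k ord f J2 * mysign k ord e I.1)
            * (monomial (chi (vtx I.1) - chi (vtx J2)) (1:k)
               * monomial (chi (vtx J2) - chi (vtx K.1)) (1:k)) := by ring
      _ = (mysign k ord e J1 * mysign k ord f I.1
            + mysign k ord f J2 * mysign k ord e I.1)
            * monomial (chi (vtx I.1) - chi (vtx K.1)) (1:k) := by
          rw [hm1, hm2]; ring
      _ = 0 := by rw [hsw, zero_mul]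
  · -- K ⊄ I : every term vanishes
    apply Finset.sum_eq_zero
    intro J _
    by_cases h1 : K.1 ⊆ J.1
    · by_cases h2 : J.1 ⊆ I.1
      · exact absurd (h1.trans h2) hKI
      · rw [MM_neg k ord h2, mul_zero]
    · rw [MM_neg k ord h1, zero_mul]

lemma DD_DD (hord : Function.Injective ord) (j : ℕ) (z : (Lam G ord (j+2)) → R) :
    DD k G ord j (DD k G ord (j+1) z) = 0 := by
  funext K
  simp only [Pi.zero_apply]
  rw [DD_apply]
  simp only [DD_apply, Finset.mul_sum]
  rw [Finset.sum_comm]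
  apply Finset.sum_eq_zero
  intro I _
  have : ∀ J : Lam G ord (j+1), MM k ord K.1 J.1 * (MM k ord J.1 I.1 * z I)
      = (MM k ord K.1 J.1 * MM k ord J.1 I.1) * z I := fun J => by ring
  rw [Finset.sum_congr rfl (fun J _ => this J), ← Finset.sum_mul,
    MM_mul_sum k G ord hord j K I, zero_mul]

end Alg2
noncomputable section Alg3

attribute [local instance] Classical.propDecidable

variable {v : ℕ} (k : Type) [Field k] (G : Finset (Edge v)) (ord : Edge v → ℕ)

local notation "R" => MvPolynomial (Fin v) k

/-- sign in the coefficient field -/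
def ksign (e : Edge v) (I : Finset (Edge v)) : k :=
  (-1 : k) ^ (I.filter (fun f => ord f < ord e)).card

lemma mysign_eq_C (e : Edge v) (I : Finset (Edge v)) :
    mysign k ord e I = C (ksign k ord e I) := by
  rw [mysign, ksign, map_pow, map_neg, map_one]

lemma mysign_mul_monomial (e : Edge v) (I : Finset (Edge v)) (b : Fin v →₀ ℕ) (c : k) :
    mysign k ord e I * monomial b c = monomial b (ksign k ord e I * c) := by
  rw [mysign_eq_C, C_mul_monomial]

/-- edges of `G` inside a vertex set `W` -/
def apexSet (W : Finset (Fin v)) : Finset (Edge v) := G.filter (fun e => e ⊆ W)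

/-- the `ord`-largest edge of `G` inside `W` (junk if none) -/
def apex (W : Finset (Fin v)) : Edge v :=
  if h : (apexSet G W).Nonempty then
    Classical.choose (Finset.exists_max_image (apexSet G W) ord h)
  else ∅

lemma mem_apexSet {W : Finset (Fin v)} {e : Edge v} :
    e ∈ apexSet G W ↔ e ∈ G ∧ e ⊆ W := by
  unfold apexSet
  exact Finset.mem_filter

lemma apex_spec {W : Finset (Fin v)} (h : (apexSet G W).Nonempty) :
    apex G ord W ∈ G ∧ apex G ord W ⊆ W ∧
      ∀ e ∈ G, e ⊆ W → ord e ≤ ord (apex G ord W) := by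
  rw [apex, dif_pos h]
  obtain ⟨hmem, hmax⟩ := Classical.choose_spec (Finset.exists_max_image (apexSet G W) ord h)
  rw [mem_apexSet] at hmem
  exact ⟨hmem.1, hmem.2, fun e he hew => hmax e ((mem_apexSet G).mpr ⟨he, hew⟩)⟩

lemma apex_strict {W : Finset (Fin v)} (h : (apexSet G W).Nonempty)
    (hord : Function.Injective ord) {e : Edge v} (he : e ∈ G) (hew : e ⊆ W)
    (hne : e ≠ apex G ord W) : ord e < ord (apex G ord W) := by
  have := (apex_spec G ord h).2.2 e he hew
  rcases lt_or_eq_of_le this with h' | h'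
  · exact h'
  · exact absurd (hord h') hne

/-- the relevant vertex support of a monomial element -/
def Wof (b : Fin v →₀ ℕ) (I : Finset (Edge v)) : Finset (Fin v) := b.support ∪ vtx I

/-- the homotopy coefficient: contribution of coordinate `I` (with polynomial `p`)
to coordinate `J` one level up -/
def hcoef (I J : Finset (Edge v)) (p : R) : R :=
  Finsupp.sum (AddMonoidAlgebra.coeff p) (fun b c =>
    if h : (apexSet G (Wof b I)).Nonempty then
      (if apex G ord (Wof b I) ∉ I ∧ J = insert (apex G ord (Wof b I)) I
        then ((-1 : R) ^ I.card) * monomial ((b + chi (vtx I)) - chi (vtx J)) c else 0)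
    else 0)

lemma hcoef_zero (I J : Finset (Edge v)) : hcoef k G ord I J 0 = 0 := by
  rw [hcoef, AddMonoidAlgebra.coeff_zero, Finsupp.sum_zero_index]

lemma hcoef_add (I J : Finset (Edge v)) (p q : R) :
    hcoef k G ord I J (p + q) = hcoef k G ord I J p + hcoef k G ord I J q := by
  rw [hcoef, hcoef, hcoef, AddMonoidAlgebra.coeff_add]
  apply Finsupp.sum_add_index'
  · intro b
    split_ifs <;> simp
  · intro b c₁ c₂
    split_ifs <;> simp [map_add, mul_add]

lemma hcoef_monomial (I J : Finset (Edge v)) (b : Fin v →₀ ℕ) (c : k) :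
    hcoef k G ord I J (monomial b c) =
      if h : (apexSet G (Wof b I)).Nonempty then
        (if apex G ord (Wof b I) ∉ I ∧ J = insert (apex G ord (Wof b I)) I
          then ((-1 : R) ^ I.card) * monomial ((b + chi (vtx I)) - chi (vtx J)) c else 0)
      else 0 := by
  rw [hcoef, ← single_eq_monomial, AddMonoidAlgebra.coeff_single, Finsupp.sum_single_index]
  split_ifs <;> simp

/-- the homotopy -/
def HH (j : ℕ) (z : Lam G ord j → R) : Lam G ord (j+1) → R :=
  fun J => ∑ I : Lam G ord j, hcoef k G ord I.1 J.1 (z I)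

lemma HH_zero (j : ℕ) : HH k G ord j 0 = 0 := by
  funext J
  rw [HH]
  simp only [Pi.zero_apply]
  exact Finset.sum_eq_zero fun I _ => hcoef_zero k G ord I.1 J.1

lemma HH_add (j : ℕ) (z w : Lam G ord j → R) :
    HH k G ord j (z + w) = HH k G ord j z + HH k G ord j w := by
  funext J
  simp only [HH, Pi.add_apply]
  rw [← Finset.sum_add_distrib]
  exact Finset.sum_congr rfl fun I _ => hcoef_add k G ord I.1 J.1 (z I) (w I)

lemma HH_single (j : ℕ) (I : Lam G ord j) (p : R) :
    HH k G ord j (Pi.single I p) = fun J => hcoef k G ord I.1 J.1 p := by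
  funext J
  rw [HH, Finset.sum_eq_single I]
  · rw [Pi.single_eq_same]
  · intro I' _ hI'
    rw [Pi.single_eq_of_ne hI', hcoef_zero]
  · intro h; exact absurd (Finset.mem_univ I) h

end Alg3
noncomputable section Alg4

attribute [local instance] Classical.propDecidable

variable {v : ℕ} (k : Type) [Field k] (G : Finset (Edge v)) (ord : Edge v → ℕ)

local notation "R" => MvPolynomial (Fin v) k

lemma Wof_eq_support (b : Fin v →₀ ℕ) (I : Finset (Edge v)) :
    Wof b I = (b + chi (vtx I)).support := by
  ext i
  simp only [Wof, Finset.mem_union, Finsupp.mem_support_iff, Finsupp.add_apply]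
  have := chi_apply (vtx I) i
  by_cases h : i ∈ vtx I <;> simp [h] at this <;> simp [h, this] <;> omega

lemma neg_one_pow_mul_monomial (n : ℕ) (b : Fin v →₀ ℕ) (c : k) :
    (-1 : R)^n * monomial b c = monomial b ((-1:k)^n * c) := by
  rw [show ((-1 : R)) = C (-1 : k) by simp, ← C_pow, C_mul_monomial]

lemma neg_one_pow_sq (n : ℕ) (c : k) : (-1:k)^n * ((-1:k)^n * c) = c := by
  rw [← mul_assoc, ← pow_add, ← two_mul, pow_mul]
  norm_num

lemma chi_le_add (b : Fin v →₀ ℕ) (s : Finset (Fin v)) : chi s ≤ b + chi s :=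
  le_add_self

lemma tsub_chi_self (b : Fin v →₀ ℕ) (s : Finset (Fin v)) : (b + chi s) - chi s = b := by
  ext i
  rw [Finsupp.tsub_apply, Finsupp.add_apply]
  omega

lemma mon_tsub_mul' {x y m : Fin v →₀ ℕ} (hxy : x ≤ y) (hym : y ≤ m) (c : k) :
    monomial (y - x) (1:k) * monomial (m - y) c = monomial (m - x) c := by
  have hexp : y - x + (m - y) = m - x := by
    ext i
    have h1 := hxy i
    have h2 := hym i
    rw [Finsupp.add_apply, Finsupp.tsub_apply, Finsupp.tsub_apply, Finsupp.tsub_apply]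
    omega
  rw [monomial_mul, one_mul, hexp]

/-- ksign of the apex counts everything below it -/
lemma ksign_apex {a : Edge v} {I : Finset (Edge v)}
    (hlt : ∀ f ∈ I, f ≠ a → ord f < ord a) (haI : a ∈ I) :
    ksign k ord a I = (-1:k) ^ (I.card - 1) := by
  rw [ksign]
  congr 1
  have : I.filter (fun f => ord f < ord a) = I.erase a := by
    ext f
    simp only [Finset.mem_filter, Finset.mem_erase]
    constructor
    · rintro ⟨hf, hlt'⟩
      exact ⟨fun h => by subst h; omega, hf⟩
    · rintro ⟨hne, hf⟩
      exact ⟨hf, hlt f hf hne⟩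
  rw [this, Finset.card_erase_of_mem haI]

lemma ksign_apex_not_mem {a : Edge v} {I : Finset (Edge v)}
    (hlt : ∀ f ∈ I, f ≠ a → ord f < ord a) (haI : a ∉ I) :
    ksign k ord a I = (-1:k) ^ I.card := by
  rw [ksign]
  congr 1
  have : I.filter (fun f => ord f < ord a) = I := by
    apply Finset.filter_true_of_mem
    intro f hf
    exact hlt f hf (fun h => haI (h ▸ hf))
  rw [this]

/-- ksign doesn't change when inserting a strictly larger element -/
lemma ksign_insert_larger {e a : Edge v} {I : Finset (Edge v)}
    (hlt : ord e < ord a) :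
    ksign k ord e (insert a I) = ksign k ord e I := by
  rw [ksign, ksign]
  congr 1
  rw [Finset.filter_insert, if_neg (by omega)]

end Alg4
noncomputable section Alg5

attribute [local instance] Classical.propDecidable

variable {v : ℕ} (k : Type) [Field k] (G : Finset (Edge v)) (ord : Edge v → ℕ)

local notation "R" => MvPolynomial (Fin v) k

lemma HH_apply (j : ℕ) (z : Lam G ord j → R) (J : Lam G ord (j+1)) :
    HH k G ord j z J = ∑ I : Lam G ord j, hcoef k G ord I.1 J.1 (z I) := rfl

lemma sdiff_erase_eq {α : Type _} [DecidableEq α] {s : Finset α} {a : α} (h : a ∈ s) :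
    s \ s.erase a = {a} := by
  ext x
  simp only [Finset.mem_sdiff, Finset.mem_erase, Finset.mem_singleton, not_and]
  constructor
  · rintro ⟨hx, h2⟩
    by_contra hne
    exact (h2 hne) hx
  · rintro rfl
    exact ⟨h, fun hc => absurd rfl hc⟩

lemma insert_sdiff_self' {α : Type _} [DecidableEq α] {s : Finset α} {a : α} (h : a ∉ s) :
    insert a s \ s = {a} := by
  ext x
  simp only [Finset.mem_sdiff, Finset.mem_insert, Finset.mem_singleton]
  constructor
  · rintro ⟨hx | hx, hxs⟩
    · exact hx
    · exact absurd hx hxs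
  · rintro rfl
    exact ⟨Or.inl rfl, h⟩

lemma vtx_insert (a : Edge v) (s : Finset (Edge v)) : vtx (insert a s) = a ∪ vtx s := by
  rw [vtx, Finset.sup_insert]
  rfl

/-- the generic form of a summand of `HH (DD z)` on a monomial generator -/
lemma term2_summand {j : ℕ}
    (I : Lam G ord (j+1)) (I' : Lam G ord j) (K : Lam G ord (j+1))
    (b : Fin v →₀ ℕ) (c : k)
    (hne : (apexSet G (Wof b I.1)).Nonempty) :
    hcoef k G ord I'.1 K.1 (MM k ord I'.1 I.1 * monomial b c) =
      if I'.1 ⊆ I.1 ∧ apex G ord (Wof b I.1) ∉ I'.1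
          ∧ K.1 = insert (apex G ord (Wof b I.1)) I'.1
      then (-1:R)^j * monomial ((b + chi (vtx I.1)) - chi (vtx K.1))
            (ksign k ord (dElt I'.1 I.1) I.1 * c)
      else 0 := by
  by_cases hsub : I'.1 ⊆ I.1
  · obtain ⟨e, heI, heI', hdiff, hIeq⟩ := sdiff_singleton_of_card hsub
      (by rw [I'.2.2.2, I.2.2.2])
    have hdE : dElt I'.1 I.1 = e := dElt_eq hdiff
    have hMM : MM k ord I'.1 I.1 * monomial b c
        = monomial ((chi (vtx I.1) - chi (vtx I'.1)) + b) (ksign k ord e I.1 * c) := by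
      rw [MM_pos k ord hsub, hdE, mul_assoc, monomial_mul, one_mul, mysign_mul_monomial]
    have hbbμ : ((chi (vtx I.1) - chi (vtx I'.1)) + b) + chi (vtx I'.1)
        = b + chi (vtx I.1) := by
      ext i
      have hle := chi_mono (vtx_mono hsub) i
      simp only [Finsupp.add_apply, Finsupp.tsub_apply]
      omega
    have hWW : Wof ((chi (vtx I.1) - chi (vtx I'.1)) + b) I'.1 = Wof b I.1 := by
      rw [Wof_eq_support, hbbμ, ← Wof_eq_support]
    rw [hMM, hcoef_monomial, hWW, dif_pos hne, hbbμ, hdE, I'.2.2.2]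
    simp only [hsub, true_and]
  · rw [MM_neg k ord hsub, zero_mul, hcoef_zero, if_neg (fun h => hsub h.1)]

end Alg5
noncomputable section Alg6

attribute [local instance] Classical.propDecidable

variable {v : ℕ} (k : Type) [Field k] (G : Finset (Edge v)) (ord : Edge v → ℕ)

local notation "R" => MvPolynomial (Fin v) k

lemma contraction_single (hord : Function.Injective ord)
    (j : ℕ) (I : Lam G ord (j+1)) (b : Fin v →₀ ℕ) (c : k) :
    DD k G ord (j+1) (HH k G ord (j+1) (Pi.single I (monomial b c)))
      + HH k G ord j (DD k G ord j (Pi.single I (monomial b c)))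
      = Pi.single I (monomial b c) := by
  classical
  have hIG := I.2.1
  have hInbc := I.2.2.1
  have hIcard := I.2.2.2
  have hIne : I.1.Nonempty := Finset.card_pos.mp (by rw [hIcard]; omega)
  have hvtxW : vtx I.1 ⊆ Wof b I.1 := Finset.subset_union_right
  have hne : (apexSet G (Wof b I.1)).Nonempty := by
    obtain ⟨e₀, he₀⟩ := hIne
    exact ⟨e₀, (mem_apexSet G).mpr ⟨hIG he₀, (edge_subset_vtx he₀).trans hvtxW⟩⟩
  obtain ⟨haG, haWb, hamax⟩ := apex_spec G ord hne
  set a := apex G ord (Wof b I.1) with ha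
  have hIin : ∀ e ∈ I.1, e ∈ G := fun e he => hIG he
  have hIsubW : ∀ e ∈ I.1, e ⊆ Wof b I.1 :=
    fun e he => (edge_subset_vtx he).trans hvtxW
  have hIlt : ∀ e ∈ I.1, e ≠ a → ord e < ord a :=
    fun e he hne' => apex_strict G ord hne hord (hIin e he) (hIsubW e he) hne'
  have hDDz : ∀ I' : Lam G ord j,
      (DD k G ord j (Pi.single I (monomial b c))) I' = MM k ord I'.1 I.1 * monomial b c :=
    fun I' => DD_single k G ord j I (monomial b c) I'
  by_cases haI : a ∈ I.1
  · -- CASE B : the apex is already in I ; H z₀ = 0 and H(D z₀) = z₀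
    have hH0 : HH k G ord (j+1) (Pi.single I (monomial b c)) = 0 := by
      rw [HH_single]
      funext J
      rw [hcoef_monomial, dif_pos hne, if_neg (fun h => h.1 haI)]
      rfl
    rw [hH0, map_zero, zero_add]
    funext K
    rw [HH_apply, Finset.sum_congr rfl
      (fun I' _ => by rw [hDDz I', term2_summand k G ord I I' K b c hne])]
    by_cases hK : K = I
    · subst hK
      have hI'0card : (K.1.erase a).card = j := by
        rw [Finset.card_erase_of_mem haI, hIcard]
        omega
      obtain ⟨I'₀, hI'₀⟩ : ∃ I'' : Lam G ord j, I''.1 = K.1.erase a :=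
        ⟨LamOf G ord K (K.1.erase a) (Finset.erase_subset _ _) hI'0card, rfl⟩
      rw [Finset.sum_eq_single I'₀]
      · rw [hI'₀]
        rw [if_pos ⟨Finset.erase_subset _ _, Finset.notMem_erase _ _,
          (Finset.insert_erase haI).symm⟩]
        rw [dElt_eq (sdiff_erase_eq haI), tsub_chi_self]
        rw [ksign_apex k ord hIlt haI]
        have hc1 : K.1.card - 1 = j := by rw [hIcard]; omega
        rw [hc1, neg_one_pow_mul_monomial, neg_one_pow_sq, Pi.single_eq_same]
      · intro I' _ hne'
        rw [if_neg]
        rintro ⟨h1, h2, h3⟩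
        apply hne'
        apply Subtype.ext
        rw [hI'₀]
        show I'.1 = K.1.erase a
        rw [h3, Finset.erase_insert h2]
      · intro hmem
        exact absurd (Finset.mem_univ I'₀) hmem
    · rw [Finset.sum_eq_zero, Pi.single_eq_of_ne hK]
      intro I' _
      rw [if_neg]
      rintro ⟨h1, h2, h3⟩
      apply hK
      apply Subtype.ext
      apply Finset.eq_of_subset_of_card_le
      · rw [h3]
        exact Finset.insert_subset haI h1
      · rw [K.2.2.2, hIcard]
  · -- CASE A : the apex is new
    have hJnbc : ¬ HasBrokenCircuit G ord (insert a I.1) :=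
      cone_nbc hInbc hIsubW haG haWb hamax hord
    set Jstar : Lam G ord (j+2) :=
      ⟨insert a I.1, Finset.insert_subset haG hIG, hJnbc,
        by rw [Finset.card_insert_of_notMem haI, hIcard]⟩ with hJs
    have hJv : (Jstar.1 : Finset (Edge v)) = insert a I.1 := rfl
    have hχJμ : chi (vtx (insert a I.1)) ≤ b + chi (vtx I.1) := by
      intro i
      show chi (vtx (insert a I.1)) i ≤ b i + chi (vtx I.1) i
      rw [chi_apply, chi_apply, vtx_insert]
      by_cases hi : i ∈ vtx I.1
      · simp [Finset.mem_union, hi]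
      · by_cases hia : i ∈ a
        · have hiW : i ∈ Wof b I.1 := haWb hia
          rw [Wof, Finset.mem_union] at hiW
          rcases hiW with h | h
          · have hb : b i ≠ 0 := Finsupp.mem_support_iff.mp h
            rw [if_pos (Finset.mem_union.mpr (Or.inl hia)), if_neg hi]
            omega
          · exact absurd h hi
        · rw [if_neg (by rw [Finset.mem_union]; tauto), if_neg hi]
          omega
    have hHz : HH k G ord (j+1) (Pi.single I (monomial b c))
        = Pi.single Jstar (monomial ((b + chi (vtx I.1)) - chi (vtx (insert a I.1)))
            ((-1:k)^(j+1) * c)) := by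
      rw [HH_single]
      funext J
      rw [hcoef_monomial, dif_pos hne]
      by_cases hJ : J = Jstar
      · subst hJ
        rw [if_pos ⟨haI, rfl⟩, Pi.single_eq_same, hIcard, neg_one_pow_mul_monomial]
      · rw [if_neg, Pi.single_eq_of_ne hJ]
        rintro ⟨-, hJeq⟩
        exact hJ (Subtype.ext hJeq)
    rw [hHz]
    funext K
    simp only [Pi.add_apply]
    rw [DD_single, HH_apply, Finset.sum_congr rfl
      (fun I' _ => by rw [hDDz I', term2_summand k G ord I I' K b c hne]), hJv]
    by_cases hK : K = I
    · subst hK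
      -- Term2 vanishes
      rw [Finset.sum_eq_zero (fun I' _ => by
        rw [if_neg]
        rintro ⟨h1, h2, h3⟩
        exact haI (h3 ▸ Finset.mem_insert_self a I'.1))]
      rw [add_zero]
      -- Term1 computes to the monomial
      rw [MM_pos k ord (Finset.subset_insert a K.1),
        dElt_eq (insert_sdiff_self' haI), mul_assoc,
        mon_tsub_mul' k (chi_mono (vtx_mono (Finset.subset_insert a K.1))) hχJμ,
        mysign_mul_monomial, tsub_chi_self]
      have hlt' : ∀ f ∈ insert a K.1, f ≠ a → ord f < ord a := by
        intro f hf hfne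
        rcases Finset.mem_insert.mp hf with rfl | hf'
        · exact absurd rfl hfne
        · exact hIlt f hf' hfne
      rw [ksign_apex k ord hlt' (Finset.mem_insert_self a K.1)]
      have hc2 : (insert a K.1).card - 1 = j + 1 := by
        rw [Finset.card_insert_of_notMem haI, hIcard]
        omega
      rw [hc2, neg_one_pow_sq, Pi.single_eq_same]
    · by_cases hKJ : K.1 ⊆ insert a I.1
      · obtain ⟨e, heJs, heK, hdiff, hJeq⟩ := sdiff_singleton_of_card hKJ
          (by rw [K.2.2.2, Finset.card_insert_of_notMem haI, hIcard])
        have hKerase : K.1 = (insert a I.1).erase e := by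
          rw [hJeq, Finset.erase_insert heK]
        have hea : e ≠ a := by
          intro h
          apply hK
          apply Subtype.ext
          rw [hKerase, h, Finset.erase_insert haI]
        have heI : e ∈ I.1 := by
          rcases Finset.mem_insert.mp heJs with rfl | h
          · exact absurd rfl hea
          · exact h
        have hKeq : K.1 = insert a (I.1.erase e) := by
          rw [hKerase, Finset.erase_insert_of_ne (Ne.symm hea)]
        -- Term1
        rw [MM_pos k ord hKJ, dElt_eq hdiff, mul_assoc,
          mon_tsub_mul' k (chi_mono (vtx_mono hKJ)) hχJμ, mysign_mul_monomial]
        -- Term2 : collapse at I.erase e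
        have hI'0card : (I.1.erase e).card = j := by
          rw [Finset.card_erase_of_mem heI, hIcard]
          omega
        obtain ⟨I'₀, hI'₀⟩ : ∃ I'' : Lam G ord j, I''.1 = I.1.erase e :=
          ⟨LamOf G ord I (I.1.erase e) (Finset.erase_subset _ _) hI'0card, rfl⟩
        rw [Finset.sum_eq_single I'₀]
        · rw [hI'₀]
          rw [if_pos ⟨Finset.erase_subset _ _,
            fun h => haI (Finset.mem_of_mem_erase h), hKeq⟩]
          rw [dElt_eq (sdiff_erase_eq heI)]
          have hsk : ksign k ord e (insert a I.1) = ksign k ord e I.1 :=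
            ksign_insert_larger k ord (hIlt e heI hea)
          rw [hsk, neg_one_pow_mul_monomial, ← map_add]
          have hco : ksign k ord e I.1 * ((-1:k)^(j+1) * c)
              + (-1:k)^j * (ksign k ord e I.1 * c) = 0 := by
            rw [pow_succ]
            ring
          rw [hco, map_zero, Pi.single_eq_of_ne hK]
        · intro I' _ hne'
          rw [if_neg]
          rintro ⟨h1, h2, h3⟩
          apply hne'
          apply Subtype.ext
          rw [hI'₀]
          show I'.1 = I.1.erase e
          have heq : insert a I'.1 = insert a (I.1.erase e) := by rw [← h3, hKeq]
          calc I'.1 = (insert a I'.1).erase a := (Finset.erase_insert h2).symm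
            _ = (insert a (I.1.erase e)).erase a := by rw [heq]
            _ = I.1.erase e := Finset.erase_insert (fun h => haI (Finset.mem_of_mem_erase h))
        · intro hmem
          exact absurd (Finset.mem_univ I'₀) hmem
      · -- K not inside Jstar : everything vanishes
        rw [MM_neg k ord hKJ, zero_mul, zero_add]
        rw [Finset.sum_eq_zero, Pi.single_eq_of_ne hK]
        intro I' _
        rw [if_neg]
        rintro ⟨h1, h2, h3⟩
        apply hKJ
        rw [h3]
        exact Finset.insert_subset_insert a h1

end Alg6
noncomputable section Alg7

attribute [local instance] Classical.propDecidable

variable {v : ℕ} (k : Type) [Field k] (G : Finset (Edge v)) (ord : Edge v → ℕ)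

local notation "R" => MvPolynomial (Fin v) k

/-- the contraction operator as an additive hom -/
def ToppOp (j : ℕ) : (Lam G ord (j+1) → R) →+ (Lam G ord (j+1) → R) where
  toFun z := DD k G ord (j+1) (HH k G ord (j+1) z) + HH k G ord j (DD k G ord j z)
  map_zero' := by
    show DD k G ord (j+1) (HH k G ord (j+1) 0) + HH k G ord j (DD k G ord j 0) = 0
    rw [HH_zero, map_zero, map_zero, HH_zero, add_zero]
  map_add' z w := by
    show DD k G ord (j+1) (HH k G ord (j+1) (z+w)) + HH k G ord j (DD k G ord j (z+w))
      = (DD k G ord (j+1) (HH k G ord (j+1) z) + HH k G ord j (DD k G ord j z))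
        + (DD k G ord (j+1) (HH k G ord (j+1) w) + HH k G ord j (DD k G ord j w))
    rw [HH_add, map_add, map_add, HH_add]
    abel

lemma contraction (hord : Function.Injective ord) (j : ℕ) (z : Lam G ord (j+1) → R) :
    DD k G ord (j+1) (HH k G ord (j+1) z) + HH k G ord j (DD k G ord j z) = z := by
  classical
  show ToppOp k G ord j z = z
  have hz := Finset.univ_sum_single (I := Lam G ord (j+1)) (M := fun _ => MvPolynomial (Fin v) k) z
  conv_lhs => rw [← hz]
  rw [map_sum]
  have hstep : ∀ I : Lam G ord (j+1),
      ToppOp k G ord j (Pi.single I (z I)) = Pi.single I (z I) := by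
    intro I
    conv_lhs => rw [← MvPolynomial.support_sum_monomial_coeff (z I)]
    conv_rhs => rw [← MvPolynomial.support_sum_monomial_coeff (z I)]
    have hsingle : (Pi.single I (∑ b ∈ (z I).support, monomial b (coeff b (z I)))
          : Lam G ord (j+1) → MvPolynomial (Fin v) k)
        = ∑ b ∈ (z I).support, Pi.single I (monomial b (coeff b (z I))) := by
      induction (z I).support using Finset.induction with
      | empty => simp
      | insert _ _ h ih =>
          rw [Finset.sum_insert h, Finset.sum_insert h, Pi.single_add, ih]
    rw [hsingle, map_sum]
    apply Finset.sum_congr rfl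
    intro b _
    exact contraction_single k G ord hord j I b (coeff b (z I))
  rw [Finset.sum_congr rfl (fun I _ => hstep I), hz]

lemma exact_L (hord : Function.Injective ord) (j : ℕ) (z : Lam G ord (j+1) → R)
    (hz : DD k G ord j z = 0) : ∃ w, DD k G ord (j+1) w = z := by
  refine ⟨HH k G ord (j+1) z, ?_⟩
  have h := contraction k G ord hord j z
  rwa [hz, HH_zero, add_zero] at h

variable (hG : ∀ e ∈ G, e.card = 2)

/-- the unique nbc-set of cardinality 0 -/
def lamEmpty : Lam G ord 0 :=
  ⟨∅, Finset.empty_subset G, not_hbc_empty hG, Finset.card_empty⟩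

lemma eq_lamEmpty (x : Lam G ord 0) : x = lamEmpty G ord hG :=
  Subtype.ext (Finset.card_eq_zero.mp x.2.2.2)

/-- the augmentation of the nbc complex -/
def EpsL : (Lam G ord 1 → R) →ₗ[R] R :=
  (LinearMap.proj (lamEmpty G ord hG)).comp (DD k G ord 0)

lemma EpsL_apply (z : Lam G ord 1 → R) :
    EpsL k G ord hG z = DD k G ord 0 z (lamEmpty G ord hG) := rfl

lemma MM_empty_single (e : Edge v) : MM k ord ∅ {e} = edgeMon k e := by
  rw [MM_pos k ord (Finset.empty_subset _), dElt_eq (by rw [Finset.sdiff_empty])]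
  have h1 : (({e} : Finset (Edge v)).filter (fun f => ord f < ord e)) = ∅ := by
    ext f
    simp only [Finset.mem_filter, Finset.mem_singleton, Finset.notMem_empty, iff_false,
      not_and]
    rintro rfl
    omega
  rw [mysign, h1]
  have h2 : vtx (∅ : Finset (Edge v)) = ∅ := rfl
  have h3 : chi (∅ : Finset (Fin v)) = 0 := by
    rw [chi, Finset.sum_empty]
  have h4 : vtx ({e} : Finset (Edge v)) = e := by
    rw [vtx, Finset.sup_singleton]
    rfl
  rw [h2, h3, h4, tsub_zero, Finset.card_empty, pow_zero, one_mul]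
  rfl

lemma EpsL_DD (hord : Function.Injective ord) (w : Lam G ord 2 → R) :
    EpsL k G ord hG (DD k G ord 1 w) = 0 := by
  rw [EpsL_apply, DD_DD k G ord hord 0 w]
  rfl

lemma ker_EpsL (hord : Function.Injective ord) (z : Lam G ord 1 → R)
    (hz : EpsL k G ord hG z = 0) : ∃ w, DD k G ord 1 w = z := by
  apply exact_L k G ord hord 0 z
  funext K
  rw [eq_lamEmpty G ord hG K, ← EpsL_apply, hz]
  rfl

lemma range_EpsL : LinearMap.range (EpsL k G ord hG)
    = Ideal.span ((edgeMon k) '' (G : Set (Edge v))) := by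
  apply le_antisymm
  · rintro x ⟨z, rfl⟩
    rw [EpsL_apply, DD_apply]
    apply Submodule.sum_mem
    intro I _
    obtain ⟨e, he⟩ := Finset.card_eq_one.mp I.2.2.2
    have heG : e ∈ G := I.2.1 (he ▸ Finset.mem_singleton_self e)
    have : MM k ord (lamEmpty G ord hG).1 I.1 = edgeMon k e := by
      rw [show ((lamEmpty G ord hG).1 : Finset (Edge v)) = ∅ from rfl, he,
        MM_empty_single]
    rw [this, mul_comm]
    exact Ideal.mul_mem_left _ _ (Ideal.subset_span ⟨e, heG, rfl⟩)
  · rw [Ideal.span_le]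
    rintro x ⟨e, heG, rfl⟩
    have heG' : e ∈ G := heG
    refine ⟨Pi.single (⟨{e}, Finset.singleton_subset_iff.mpr heG',
      not_hbc_singleton hG heG', Finset.card_singleton e⟩ : Lam G ord 1) 1, ?_⟩
    rw [EpsL_apply]
    refine (DD_single k G ord 0 _ 1 _).trans ?_
    rw [mul_one,
      show ((lamEmpty G ord hG).1 : Finset (Edge v)) = ∅ from rfl, MM_empty_single]

end Alg7
noncomputable section Alg8

variable {v : ℕ} (k : Type) [Field k]

local notation "R" => MvPolynomial (Fin v) k

/-- reduction of a matrix/linear map modulo the irrelevant maximal ideal -/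
def red {α γ : Type} (T : (α → R) →ₗ[R] (γ → R)) :
    (α → k) →ₗ[k] (γ → k) where
  toFun u l := constantCoeff (T (fun i => C (u i)) l)
  map_add' u w := by
    funext l
    have h : (fun i => (C ((u + w) i) : MvPolynomial (Fin v) k))
        = (fun i => (C (u i) : MvPolynomial (Fin v) k)) + (fun i => C (w i)) := by
      funext i
      simp [map_add]
    show constantCoeff (T (fun i => C ((u + w) i)) l) = _
    rw [h, map_add]
    simp
  map_smul' c u := by
    funext l
    have h : (fun i => (C ((c • u) i) : MvPolynomial (Fin v) k))
        = ((C c : MvPolynomial (Fin v) k)) • (fun i => (C (u i) : MvPolynomial (Fin v) k)) := by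
      funext i
      simp [Pi.smul_apply, smul_eq_mul, map_mul]
    show constantCoeff (T (fun i => C ((c • u) i)) l) = _
    rw [h, map_smul]
    simp [smul_eq_mul, map_mul]

lemma red_apply {α γ : Type} (T : (α → R) →ₗ[R] (γ → R)) (u : α → k) (l : γ) :
    red k T u l = constantCoeff (T (fun i => C (u i)) l) := rfl

lemma red_id {α : Type} : red k (LinearMap.id : (α → R) →ₗ[R] (α → R)) = LinearMap.id := by
  apply LinearMap.ext
  intro u
  funext l
  rw [red_apply]
  simp

lemma red_add {α γ : Type} (T U : (α → R) →ₗ[R] (γ → R)) :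
    red k (T + U) = red k T + red k U := by
  apply LinearMap.ext
  intro u
  funext l
  rw [red_apply]
  simp only [LinearMap.add_apply, Pi.add_apply, map_add]
  rfl

lemma red_sub {α γ : Type} (T U : (α → R) →ₗ[R] (γ → R)) :
    red k (T - U) = red k T - red k U := by
  apply LinearMap.ext
  intro u
  funext l
  rw [red_apply]
  simp only [LinearMap.sub_apply, Pi.sub_apply, map_sub]
  rfl

lemma constantCoeff_map_of_zero {α γ : Type} [Fintype α]
    (T : (α → R) →ₗ[R] (γ → R)) (w : α → R)
    (hw : ∀ i, constantCoeff (w i) = 0) (l : γ) :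
    constantCoeff (T w l) = 0 := by
  classical
  have hw' : w = ∑ i : α, w i • (fun j => if i = j then (1:R) else 0) := pi_eq_sum_univ w
  rw [hw', map_sum, Finset.sum_apply, map_sum]
  apply Finset.sum_eq_zero
  intro i _
  rw [map_smul, Pi.smul_apply, smul_eq_mul, map_mul, hw i, zero_mul]

lemma red_comp {α γ δ : Type} [Fintype γ]
    (T : (γ → R) →ₗ[R] (δ → R)) (U : (α → R) →ₗ[R] (γ → R)) :
    red k (T ∘ₗ U) = red k T ∘ₗ red k U := by
  apply LinearMap.ext
  intro u
  funext l
  rw [LinearMap.comp_apply, red_apply, red_apply, LinearMap.comp_apply]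
  set w : γ → R := U (fun i => C (u i)) with hw
  have hdecomp : w = (fun i => C (constantCoeff (w i)))
      + (fun i => w i - C (constantCoeff (w i))) := by
    funext i
    simp
  rw [hdecomp, map_add]
  have h2 : constantCoeff (T (fun i => w i - C (constantCoeff (w i))) l) = 0 := by
    apply constantCoeff_map_of_zero
    intro i
    simp
  rw [Pi.add_apply, map_add, h2, add_zero]
  rfl

/-- if all entries of T kill the constant coefficient, its reduction vanishes -/
lemma red_eq_zero_left {α γ : Type} (T : (α → R) →ₗ[R] (γ → R))
    (hT : ∀ x l, constantCoeff (T x l) = 0) : red k T = 0 := by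
  apply LinearMap.ext
  intro u
  funext l
  rw [red_apply, hT]
  rfl

/-- reduction of `S ∘ T` vanishes when `T` has entries with zero constant term -/
lemma red_comp_eq_zero {α γ δ : Type} [Fintype γ]
    (S : (γ → R) →ₗ[R] (δ → R)) (T : (α → R) →ₗ[R] (γ → R))
    (hT : ∀ x l, constantCoeff (T x l) = 0) : red k (S ∘ₗ T) = 0 := by
  apply LinearMap.ext
  intro u
  funext l
  rw [red_apply, LinearMap.comp_apply]
  rw [constantCoeff_map_of_zero k S _ (fun i => hT _ i) l]
  rfl

end Alg8
noncomputable section Alg9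

lemma lift_of_range_le {R' : Type} [CommRing R'] {P M N : Type}
    [AddCommGroup P] [Module R' P] [AddCommGroup M] [Module R' M]
    [AddCommGroup N] [Module R' N] [Module.Projective R' P]
    (u : P →ₗ[R'] N) (w : M →ₗ[R'] N) (h : LinearMap.range u ≤ LinearMap.range w) :
    ∃ h' : P →ₗ[R'] M, w ∘ₗ h' = u := by
  obtain ⟨h', hh⟩ := Module.projective_lifting_property w.rangeRestrict
    (u.codRestrict (LinearMap.range w) (fun x => h (LinearMap.mem_range_self u x)))
    (LinearMap.surjective_rangeRestrict w)
  refine ⟨h', ?_⟩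
  ext x
  have hx := LinearMap.congr_fun hh x
  exact congrArg Subtype.val hx

end Alg9

set_option maxHeartbeats 2000000 in
theorem betti_le_nbc (k : Type) [Field k]
    (G : Finset (Edge v)) (hG : ∀ e ∈ G, e.card = 2)
    (ord : Edge v → ℕ) (hord : Function.Injective ord)  -- a fixed monomial order
    (𝔞 : Ideal (MvPolynomial (Fin v) k))
    (h𝔞 : 𝔞 = Ideal.span ((edgeMon k) '' (G : Set (Edge v))))
    -- a minimal free resolution  ⋯ → S^{β 1} → S^{β 0} → 𝔞 → 0  of the module 𝔞 :
    (β : ℕ → ℕ)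
    (d : ∀ i : ℕ, (Fin (β (i+1)) → MvPolynomial (Fin v) k) →ₗ[MvPolynomial (Fin v) k]
        (Fin (β i) → MvPolynomial (Fin v) k))
    (ε : (Fin (β 0) → MvPolynomial (Fin v) k) →ₗ[MvPolynomial (Fin v) k]
        MvPolynomial (Fin v) k)
    (hsurj : LinearMap.range ε = (𝔞 : Submodule (MvPolynomial (Fin v) k) (MvPolynomial (Fin v) k)))
    (hexact0 : LinearMap.ker ε = LinearMap.range (d 0))
    (hexact : ∀ i, LinearMap.ker (d i) = LinearMap.range (d (i+1)))
    -- minimality: all entries of the differentials lie in the maximal ideal ⟨x_1,…,x_v⟩ :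
    (hmin : ∀ i x j, d i x j ∈ Ideal.span (Set.range (X : Fin v → MvPolynomial (Fin v) k))) :
    ∀ i, β i ≤ nbcCount G ord (i + 1) := by
  classical
  -- entries of the differentials have zero constant coefficient
  have hdcc : ∀ i x l, constantCoeff (d i x l) = 0 := by
    intro i x l
    have hsp : Ideal.span (Set.range (X : Fin v → MvPolynomial (Fin v) k))
        ≤ RingHom.ker (constantCoeff (R := k) (σ := Fin v)) := by
      rw [Ideal.span_le]
      rintro p ⟨i', rfl⟩
      simp [RingHom.mem_ker]
    exact hsp (hmin i x l)
  have hdd : ∀ i x, d i (d (i+1) x) = 0 := by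
    intro i x
    have hx : d (i+1) x ∈ LinearMap.range (d (i+1)) := LinearMap.mem_range_self _ x
    rw [← hexact i] at hx
    exact hx
  have hεd : ∀ x, ε (d 0 x) = 0 := by
    intro x
    have hx : d 0 x ∈ LinearMap.range (d 0) := LinearMap.mem_range_self _ x
    rw [← hexact0] at hx
    exact hx
  -- the comparison map F → L
  obtain ⟨f0, hf0⟩ : ∃ φ, EpsL k G ord hG ∘ₗ φ = ε := by
    apply lift_of_range_le
    rw [hsurj, range_EpsL k G ord hG, ← h𝔞]
  obtain ⟨f1, hf1⟩ : ∃ φ, DD k G ord 1 ∘ₗ φ = f0 ∘ₗ d 0 := by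
    apply lift_of_range_le
    rintro y ⟨x, rfl⟩
    have h0 : EpsL k G ord hG (f0 (d 0 x)) = 0 := by
      have hc := LinearMap.congr_fun hf0 (d 0 x)
      rw [LinearMap.comp_apply] at hc
      rw [hc]
      exact hεd x
    obtain ⟨w, hw⟩ := ker_EpsL k G ord hG hord _ h0
    exact ⟨w, hw⟩
  let Tf : ℕ → Type := fun n =>
    {p : ((Fin (β n) → MvPolynomial (Fin v) k) →ₗ[MvPolynomial (Fin v) k]
            (Lam G ord (n+1) → MvPolynomial (Fin v) k)) ×
         ((Fin (β (n+1)) → MvPolynomial (Fin v) k) →ₗ[MvPolynomial (Fin v) k]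
            (Lam G ord (n+2) → MvPolynomial (Fin v) k)) //
      DD k G ord (n+1) ∘ₗ p.2 = p.1 ∘ₗ d n}
  have hfex : ∀ n (p : Tf n), ∃ φ, DD k G ord (n+2) ∘ₗ φ = p.1.2 ∘ₗ d (n+1) := by
    intro n p
    apply lift_of_range_le
    rintro y ⟨x, rfl⟩
    have h0 : DD k G ord (n+1) (p.1.2 (d (n+1) x)) = 0 := by
      rw [show DD k G ord (n+1) (p.1.2 (d (n+1) x))
          = (DD k G ord (n+1) ∘ₗ p.1.2) (d (n+1) x) from rfl, p.2]
      show p.1.1 (d n (d (n+1) x)) = 0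
      rw [hdd n x, map_zero]
    obtain ⟨w, hw⟩ := exact_L k G ord hord (n+1) _ h0
    exact ⟨w, hw⟩
  let ftow : ∀ n, Tf n := fun n =>
    Nat.rec (⟨(f0, f1), hf1⟩ : Tf 0)
      (fun n p => ⟨(p.1.2, Classical.choose (hfex n p)), Classical.choose_spec (hfex n p)⟩) n
  let f : ∀ n, (Fin (β n) → MvPolynomial (Fin v) k) →ₗ[MvPolynomial (Fin v) k]
      (Lam G ord (n+1) → MvPolynomial (Fin v) k) := fun n => (ftow n).1.1
  have hfchain : ∀ n, DD k G ord (n+1) ∘ₗ f (n+1) = f n ∘ₗ d n := fun n => (ftow n).2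
  have hf0' : EpsL k G ord hG ∘ₗ f 0 = ε := hf0
  -- the comparison map L → F
  obtain ⟨g0, hg0⟩ : ∃ ψ, ε ∘ₗ ψ = EpsL k G ord hG := by
    apply lift_of_range_le
    rw [hsurj, range_EpsL k G ord hG, ← h𝔞]
  obtain ⟨g1, hg1⟩ : ∃ ψ, d 0 ∘ₗ ψ = g0 ∘ₗ DD k G ord 1 := by
    apply lift_of_range_le
    rintro y ⟨x, rfl⟩
    rw [← hexact0]
    show ε (g0 (DD k G ord 1 x)) = 0
    have hc := LinearMap.congr_fun hg0 (DD k G ord 1 x)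
    rw [LinearMap.comp_apply] at hc
    rw [hc]
    exact EpsL_DD k G ord hG hord x
  let Tg : ℕ → Type := fun n =>
    {p : ((Lam G ord (n+1) → MvPolynomial (Fin v) k) →ₗ[MvPolynomial (Fin v) k]
            (Fin (β n) → MvPolynomial (Fin v) k)) ×
         ((Lam G ord (n+2) → MvPolynomial (Fin v) k) →ₗ[MvPolynomial (Fin v) k]
            (Fin (β (n+1)) → MvPolynomial (Fin v) k)) //
      d n ∘ₗ p.2 = p.1 ∘ₗ DD k G ord (n+1)}
  have hgex : ∀ n (p : Tg n), ∃ ψ, d (n+1) ∘ₗ ψ = p.1.2 ∘ₗ DD k G ord (n+2) := by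
    intro n p
    apply lift_of_range_le
    rintro y ⟨x, rfl⟩
    rw [← hexact n]
    show d n (p.1.2 (DD k G ord (n+2) x)) = 0
    rw [show d n (p.1.2 (DD k G ord (n+2) x))
        = (d n ∘ₗ p.1.2) (DD k G ord (n+2) x) from rfl, p.2]
    show p.1.1 (DD k G ord (n+1) (DD k G ord (n+2) x)) = 0
    rw [DD_DD k G ord hord (n+1) x, map_zero]
  let gtow : ∀ n, Tg n := fun n =>
    Nat.rec (⟨(g0, g1), hg1⟩ : Tg 0)
      (fun n p => ⟨(p.1.2, Classical.choose (hgex n p)), Classical.choose_spec (hgex n p)⟩) n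
  let g : ∀ n, (Lam G ord (n+1) → MvPolynomial (Fin v) k) →ₗ[MvPolynomial (Fin v) k]
      (Fin (β n) → MvPolynomial (Fin v) k) := fun n => (gtow n).1.1
  have hgchain : ∀ n, d n ∘ₗ g (n+1) = g n ∘ₗ DD k G ord (n+1) := fun n => (gtow n).2
  have hg0' : ε ∘ₗ g 0 = EpsL k G ord hG := hg0
  -- the homotopy
  let θ : ∀ n, (Fin (β n) → MvPolynomial (Fin v) k) →ₗ[MvPolynomial (Fin v) k]
      (Fin (β n) → MvPolynomial (Fin v) k) := fun n => g n ∘ₗ f n - LinearMap.id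
  have hθapp : ∀ n (x : Fin (β n) → MvPolynomial (Fin v) k),
      θ n x = g n (f n x) - x := fun n x => rfl
  obtain ⟨s0, hs0⟩ : ∃ σ, d 0 ∘ₗ σ = θ 0 := by
    apply lift_of_range_le
    rintro y ⟨x, rfl⟩
    rw [← hexact0]
    show ε (θ 0 x) = 0
    have hc1 := LinearMap.congr_fun hg0' (f 0 x)
    rw [LinearMap.comp_apply] at hc1
    have hc2 := LinearMap.congr_fun hf0' x
    rw [LinearMap.comp_apply] at hc2
    rw [hθapp 0 x, map_sub, hc1, hc2, sub_self]
  obtain ⟨s1, hs1⟩ : ∃ σ, d 1 ∘ₗ σ = θ 1 - s0 ∘ₗ d 0 := by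
    apply lift_of_range_le
    rintro y ⟨x, rfl⟩
    rw [← hexact 0]
    show d 0 ((θ 1 - s0 ∘ₗ d 0) x) = 0
    rw [LinearMap.sub_apply, map_sub]
    have h1 : d 0 (θ 1 x) = θ 0 (d 0 x) := by
      rw [hθapp 1 x, hθapp 0 (d 0 x), map_sub]
      congr 1
      calc d 0 (g 1 (f 1 x)) = g 0 (DD k G ord 1 (f 1 x)) :=
            LinearMap.congr_fun (hgchain 0) (f 1 x)
        _ = g 0 (f 0 (d 0 x)) := congrArg (g 0) (LinearMap.congr_fun (hfchain 0) x)
    have h2 : d 0 ((s0 ∘ₗ d 0) x) = θ 0 (d 0 x) := by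
      show d 0 (s0 (d 0 x)) = θ 0 (d 0 x)
      rw [show d 0 (s0 (d 0 x)) = (d 0 ∘ₗ s0) (d 0 x) from rfl, hs0]
    rw [h1, h2, sub_self]
  let Ts : ℕ → Type := fun n =>
    {p : ((Fin (β n) → MvPolynomial (Fin v) k) →ₗ[MvPolynomial (Fin v) k]
            (Fin (β (n+1)) → MvPolynomial (Fin v) k)) ×
         ((Fin (β (n+1)) → MvPolynomial (Fin v) k) →ₗ[MvPolynomial (Fin v) k]
            (Fin (β (n+2)) → MvPolynomial (Fin v) k)) //
      d (n+1) ∘ₗ p.2 = θ (n+1) - p.1 ∘ₗ d n}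
  have hsex : ∀ n (p : Ts n), ∃ σ, d (n+2) ∘ₗ σ = θ (n+2) - p.1.2 ∘ₗ d (n+1) := by
    intro n p
    apply lift_of_range_le
    rintro y ⟨x, rfl⟩
    rw [← hexact (n+1)]
    show d (n+1) ((θ (n+2) - p.1.2 ∘ₗ d (n+1)) x) = 0
    rw [LinearMap.sub_apply, map_sub]
    have h1 : d (n+1) (θ (n+2) x) = θ (n+1) (d (n+1) x) := by
      rw [hθapp (n+2) x, hθapp (n+1) (d (n+1) x), map_sub]
      congr 1
      calc d (n+1) (g (n+2) (f (n+2) x)) = g (n+1) (DD k G ord (n+2) (f (n+2) x)) :=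
            LinearMap.congr_fun (hgchain (n+1)) (f (n+2) x)
        _ = g (n+1) (f (n+1) (d (n+1) x)) :=
            congrArg (g (n+1)) (LinearMap.congr_fun (hfchain (n+1)) x)
    have h2 : d (n+1) ((p.1.2 ∘ₗ d (n+1)) x) = θ (n+1) (d (n+1) x) := by
      show d (n+1) (p.1.2 (d (n+1) x)) = θ (n+1) (d (n+1) x)
      rw [show d (n+1) (p.1.2 (d (n+1) x)) = (d (n+1) ∘ₗ p.1.2) (d (n+1) x) from rfl, p.2]
      show θ (n+1) (d (n+1) x) - p.1.1 (d n (d (n+1) x)) = θ (n+1) (d (n+1) x)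
      rw [hdd n x, map_zero, sub_zero]
    rw [h1, h2, sub_self]
  let stow : ∀ n, Ts n := fun n =>
    Nat.rec (⟨(s0, s1), hs1⟩ : Ts 0)
      (fun n p => ⟨(p.1.2, Classical.choose (hsex n p)), Classical.choose_spec (hsex n p)⟩) n
  let s : ∀ n, (Fin (β n) → MvPolynomial (Fin v) k) →ₗ[MvPolynomial (Fin v) k]
      (Fin (β (n+1)) → MvPolynomial (Fin v) k) := fun n => (stow n).1.1
  have hs0' : d 0 ∘ₗ s 0 = θ 0 := hs0
  have hsrel : ∀ n, d (n+1) ∘ₗ s (n+1) = θ (n+1) - s n ∘ₗ d n := fun n => (stow n).2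
  -- reductions
  intro i
  have hredθ : ∀ n, red k (θ n) = 0 := by
    intro n
    cases n with
    | zero =>
        rw [← hs0']
        apply red_eq_zero_left
        intro x l
        exact hdcc 0 (s 0 x) l
    | succ n =>
        have hθ : θ (n+1) = d (n+1) ∘ₗ s (n+1) + s n ∘ₗ d n := by
          rw [hsrel n]
          abel
        rw [hθ, red_add]
        have hz1 : red k (d (n+1) ∘ₗ s (n+1)) = 0 := by
          apply red_eq_zero_left
          intro x l
          exact hdcc (n+1) (s (n+1) x) l
        have hz2 : red k (s n ∘ₗ d n) = 0 :=
          red_comp_eq_zero k (s n) (d n) (hdcc n)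
        rw [hz1, hz2, add_zero]
  have hgf : g i ∘ₗ f i = θ i + LinearMap.id := by
    show g i ∘ₗ f i = (g i ∘ₗ f i - LinearMap.id) + LinearMap.id
    abel
  have hredgf : red k (g i) ∘ₗ red k (f i) = LinearMap.id := by
    rw [← red_comp, hgf, red_add, hredθ i, red_id, zero_add]
  have hinj : Function.Injective (red k (f i)) := by
    have hinj2 : Function.Injective (⇑(red k (g i)) ∘ ⇑(red k (f i))) := by
      rw [show ⇑(red k (g i)) ∘ ⇑(red k (f i)) = ⇑(red k (g i) ∘ₗ red k (f i)) from rfl,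
        hredgf]
      exact fun a b h => h
    exact Function.Injective.of_comp hinj2
  have hrank := LinearMap.finrank_le_finrank_of_injective hinj
  rw [Module.finrank_fintype_fun_eq_card, Module.finrank_fintype_fun_eq_card,
    Fintype.card_fin] at hrank
  calc β i ≤ Fintype.card (Lam G ord (i+1)) := hrank
    _ = Nat.card (Lam G ord (i+1)) := (Nat.card_eq_fintype_card).symm
    _ = nbcCount G ord (i+1) := rfl
end

section
/- Let P be a finite poset on {1,...,n} with i ≺ j implying i < j, and 𝔞 the Stanley–Reisner ideal of its order complex. Define rational functions by the recursion f_n = 0 and f_i = t x_i Σ_{i<j, i⊀j} ((f_j + t x_j)/(1 - f_j)) Π_{r=i+1}^{j-1} ((1 + t x_r)/(1 - f_r)). Then each f_i can be written as f_i = w_i / (1 - Σ_{r=i+1}^n w_r), where the w_i are polynomials determined by w_n = 0 and w_i = t x_i Σ_{i<j, i⊀j} ( w_j + t x_j - t x_j Σ_{r>j} w_r ) Π_{r=i+1}^{j-1} (1 + t x_r). -/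
/-!
STATEMENT 16: In the field `K = k(x_1,…,x_n,t)` of rational functions, let
`f_i` be defined by the recursion
  `f_i = t x_i Σ_{i<j, i⊀j} ((f_j + t x_j)/(1 - f_j)) Π_{r=i+1}^{j-1} ((1 + t x_r)/(1 - f_r))`
(the last one being `0`, since the sum is empty) and let `w_i` be defined by
  `w_i = t x_i Σ_{i<j, i⊀j} (w_j + t x_j - t x_j Σ_{r>j} w_r) Π_{r=i+1}^{j-1} (1 + t x_r)`.
Then each `w_i` is a polynomial and `f_i = w_i / (1 - Σ_{r>i} w_r)`.
-/

open scoped Classical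

noncomputable section

variable {n : ℕ} (k : Type) [Field k]

abbrev K (k : Type) [Field k] (n : ℕ) := FractionRing (MvPolynomial (Fin n ⊕ Unit) k)

def xv (i : Fin n) : K k n :=
  algebraMap (MvPolynomial (Fin n ⊕ Unit) k) (K k n) (MvPolynomial.X (Sum.inl i))

def tv : K k n :=
  algebraMap (MvPolynomial (Fin n ⊕ Unit) k) (K k n) (MvPolynomial.X (Sum.inr ()))

lemma my_telescope {F : Type*} [Field F] (g : ℕ → F) :
    ∀ b a, a < b → (∀ m, a < m → m ≤ b → g m ≠ 0) →
    ∏ r ∈ Finset.Ioo a b, (g (r+1) / g r) = g b / g (a+1) := by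
  intro b
  induction b with
  | zero => intro a ha; omega
  | succ b ihb =>
    intro a ha hne
    rcases eq_or_lt_of_le (Nat.lt_succ_iff.mp ha) with h | h
    · subst h
      have : Finset.Ioo a (a+1) = ∅ := by ext m; simp
      rw [this, Finset.prod_empty, div_self (hne (a+1) (Nat.lt_succ_self a) le_rfl)]
    · have hins : insert b (Finset.Ioo a b) = Finset.Ioo a (b+1) := by
        rw [Finset.Ioo_insert_right h]
        ext m; simp
      rw [← hins, Finset.prod_insert (by simp)]
      rw [ihb a h (fun m hm hm' => hne m hm (by omega))]
      have hb : g b ≠ 0 := hne b h (by omega)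
      have ha1 : g (a+1) ≠ 0 := hne (a+1) (by omega) (by omega)
      field_simp

lemma my_fin_prod {M : Type*} [CommMonoid M] {n : ℕ} (i j : Fin n) (h : ℕ → M) :
    ∏ r ∈ Finset.Ioo i j, h r.val = ∏ m ∈ Finset.Ioo i.val j.val, h m := by
  rw [← Fin.map_valEmbedding_Ioo, Finset.prod_map]
  rfl

set_option maxRecDepth 10000 in
set_option maxHeartbeats 1000000 in
theorem f_eq_w_div (pre : Fin n → Fin n → Prop) [IsStrictOrder (Fin n) pre]
    (hcomp : ∀ a b, pre a b → a < b)
    (f w : Fin n → K k n)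
    (hf : ∀ i, f i = tv k * xv k i *
      ∑ j ∈ Finset.univ.filter (fun j => i < j ∧ ¬ pre i j),
        ((f j + tv k * xv k j) / (1 - f j)) *
          ∏ r ∈ Finset.Ioo i j, ((1 + tv k * xv k r) / (1 - f r)))
    (hw : ∀ i, w i = tv k * xv k i *
      ∑ j ∈ Finset.univ.filter (fun j => i < j ∧ ¬ pre i j),
        (w j + tv k * xv k j - tv k * xv k j * ∑ r ∈ Finset.Ioi j, w r) *
          ∏ r ∈ Finset.Ioo i j, (1 + tv k * xv k r)) :
    (∀ i, w i ∈ Set.range (algebraMap (MvPolynomial (Fin n ⊕ Unit) k) (K k n))) ∧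
    (∀ i, f i = w i / (1 - ∑ r ∈ Finset.Ioi i, w r)) := by
  set A := MvPolynomial (Fin n ⊕ Unit) k with hA
  set φ := algebraMap (MvPolynomial (Fin n ⊕ Unit) k) (K k n) with hφdef
  set T : A := MvPolynomial.X (Sum.inr ()) with hT
  -- the denominators as a function of a natural number cutoff
  set g : ℕ → K k n := fun m => 1 - ∑ r ∈ Finset.univ.filter (fun r : Fin n => m ≤ r.val), w r
    with hg
  have hVgen : ∀ j : Fin n, (1 - ∑ r ∈ Finset.Ioi j, w r) = g (j.val + 1) := by
    intro j
    have : Finset.Ioi j = Finset.univ.filter (fun r : Fin n => j.val + 1 ≤ r.val) := by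
      ext r
      simp only [Finset.mem_Ioi, Finset.mem_filter, Finset.mem_univ, true_and, Fin.lt_def]
      omega
    rw [hg, this]
  have hUgen : ∀ j : Fin n, g j.val = (1 - ∑ r ∈ Finset.Ioi j, w r) - w j := by
    intro j
    have h1 : Finset.univ.filter (fun r : Fin n => j.val ≤ r.val)
        = insert j (Finset.univ.filter (fun r : Fin n => j.val + 1 ≤ r.val)) := by
      ext r
      simp only [Finset.mem_filter, Finset.mem_univ, true_and, Finset.mem_insert]
      constructor
      · intro h
        rcases eq_or_lt_of_le h with h' | h'
        · left; exact (Fin.ext h'.symm)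
        · right; omega
      · rintro (rfl | h) <;> omega
    have h2 : Finset.Ioi j = Finset.univ.filter (fun r : Fin n => j.val + 1 ≤ r.val) := by
      ext r
      simp only [Finset.mem_Ioi, Finset.mem_filter, Finset.mem_univ, true_and, Fin.lt_def]
      omega
    rw [hg]
    simp only [h1, h2]
    rw [Finset.sum_insert (by simp)]
    ring
  have key : ∀ i : Fin n, (∃ q : A, w i = φ (T * q)) ∧
      f i = w i / (1 - ∑ r ∈ Finset.Ioi i, w r) := by
    have wf : WellFounded ((· > ·) : Fin n → Fin n → Prop) :=
      (inferInstance : IsWellFounded (Fin n) (· > ·)).wf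
    intro i
    induction i using WellFounded.induction wf with
    | _ i ih =>
    choose q hq1 using fun (j : Fin n) (hj : i < j) => (ih j hj).1
    set q' : Fin n → A := fun r => if h : i < r then q r h else 0 with hq'def
    have hq'w : ∀ r, i < r → w r = φ (T * q' r) := by
      intro r hr
      simpa [hq'def, dif_pos hr] using hq1 r hr
    have hfr : ∀ r, i < r → f r = w r / (1 - ∑ s ∈ Finset.Ioi r, w s) :=
      fun r hr => (ih r hr).2
    -- nonvanishing of the denominators
    have hgφ : ∀ m, i.val < m →
        g m = φ (1 - ∑ r ∈ Finset.univ.filter (fun r : Fin n => m ≤ r.val), (T * q' r)) := by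
      intro m hm
      have hsum : ∑ r ∈ Finset.univ.filter (fun r : Fin n => m ≤ r.val), w r
          = φ (∑ r ∈ Finset.univ.filter (fun r : Fin n => m ≤ r.val), (T * q' r)) := by
        rw [map_sum]
        refine Finset.sum_congr rfl fun r hr => ?_
        have : i < r := by
          have := (Finset.mem_filter.mp hr).2
          rw [Fin.lt_def]; omega
        exact hq'w r this
      rw [hg]
      simp only [hsum, map_sub, map_one]
    have hgne : ∀ m, i.val < m → g m ≠ 0 := by
      intro m hm h0
      rw [hgφ m hm] at h0
      have h1 : (1 - ∑ r ∈ Finset.univ.filter (fun r : Fin n => m ≤ r.val), (T * q' r) : A)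
          = 0 := by
        apply IsFractionRing.injective A (K k n)
        simpa using h0
      have := congrArg MvPolynomial.constantCoeff h1
      simp [hT, MvPolynomial.constantCoeff_X] at this
    -- part 1 : w i is t times a polynomial
    have hij_of_mem : ∀ j ∈ Finset.univ.filter (fun j => i < j ∧ ¬ pre i j), i < j :=
      fun j hj => (Finset.mem_filter.mp hj).2.1
    have part1 : ∃ q : A, w i = φ (T * q) := by
      refine ⟨MvPolynomial.X (Sum.inl i) *
        ∑ j ∈ Finset.univ.filter (fun j => i < j ∧ ¬ pre i j),
          (T * q' j + T * MvPolynomial.X (Sum.inl j)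
            - T * MvPolynomial.X (Sum.inl j) * ∑ r ∈ Finset.Ioi j, (T * q' r)) *
          ∏ r ∈ Finset.Ioo i j, (1 + T * MvPolynomial.X (Sum.inl r)), ?_⟩
      have hsumEq : ∑ j ∈ Finset.univ.filter (fun j => i < j ∧ ¬ pre i j),
          (w j + tv k * xv k j - tv k * xv k j * ∑ r ∈ Finset.Ioi j, w r) *
            ∏ r ∈ Finset.Ioo i j, (1 + tv k * xv k r)
          = φ (∑ j ∈ Finset.univ.filter (fun j => i < j ∧ ¬ pre i j),
            (T * q' j + T * MvPolynomial.X (Sum.inl j)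
              - T * MvPolynomial.X (Sum.inl j) * ∑ r ∈ Finset.Ioi j, (T * q' r)) *
            ∏ r ∈ Finset.Ioo i j, (1 + T * MvPolynomial.X (Sum.inl r))) := by
        rw [map_sum]
        refine Finset.sum_congr rfl fun j hj => ?_
        have hij : i < j := hij_of_mem j hj
        have e1 : ∀ r ∈ Finset.Ioi j, w r = φ (T * q' r) :=
          fun r hr => hq'w r (hij.trans (Finset.mem_Ioi.mp hr))
        rw [Finset.sum_congr rfl e1, hq'w j hij]
        simp only [map_mul, map_sub, map_add, map_sum, map_prod, map_one, tv, xv, hφdef, hT]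
      rw [hw i, hsumEq]
      simp only [map_mul, tv, xv, hφdef, hT, mul_assoc]
    -- part 2 : f i = w i / (1 - sum)
    have part2 : f i = w i / (1 - ∑ r ∈ Finset.Ioi i, w r) := by
      have hii1 : (i : ℕ) < i.val + 1 := Nat.lt_succ_self _
      have h1mf : ∀ r, i < r → 1 - f r = g r.val / g (r.val + 1) := by
        intro r hr
        have hrv : i.val < r.val := hr
        have hV : g (r.val + 1) ≠ 0 := hgne _ (by omega)
        rw [hfr r hr, hVgen r, hUgen r, hVgen r]
        field_simp
      have hterm : ∀ j ∈ Finset.univ.filter (fun j => i < j ∧ ¬ pre i j),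
          ((f j + tv k * xv k j) / (1 - f j)) *
            ∏ r ∈ Finset.Ioo i j, ((1 + tv k * xv k r) / (1 - f r))
          = ((w j + tv k * xv k j * (1 - ∑ r ∈ Finset.Ioi j, w r)) *
              ∏ r ∈ Finset.Ioo i j, (1 + tv k * xv k r)) / g (i.val + 1) := by
        intro j hj
        have hij : i < j := hij_of_mem j hj
        have hijv : i.val < j.val := hij
        have hVj : g (j.val + 1) ≠ 0 := hgne _ (by omega)
        have hUj : g j.val ≠ 0 := hgne _ (by omega)
        have hVi : g (i.val + 1) ≠ 0 := hgne _ (by omega)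
        have eprod : ∏ r ∈ Finset.Ioo i j, ((1 + tv k * xv k r) / (1 - f r))
            = (∏ r ∈ Finset.Ioo i j, (1 + tv k * xv k r)) * (g j.val / g (i.val + 1)) := by
          have e1 : ∀ r ∈ Finset.Ioo i j, (1 + tv k * xv k r) / (1 - f r)
              = (1 + tv k * xv k r) * (g (r.val + 1) / g r.val) := by
            intro r hr
            have hir : i < r := (Finset.mem_Ioo.mp hr).1
            rw [h1mf r hir, div_div_eq_mul_div, mul_div_assoc]
          rw [Finset.prod_congr rfl e1, Finset.prod_mul_distrib]
          congr 1
          rw [my_fin_prod i j (fun m => g (m + 1) / g m)]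
          exact my_telescope g j.val i.val hijv (fun m hm hm' => hgne m (by omega))
        rw [eprod, h1mf j hij, hfr j hij, hVgen j]
        field_simp
      rw [hf i, Finset.sum_congr rfl hterm, ← Finset.sum_div, ← mul_div_assoc]
      have hwi' : tv k * xv k i *
          ∑ j ∈ Finset.univ.filter (fun j => i < j ∧ ¬ pre i j),
            (w j + tv k * xv k j * (1 - ∑ r ∈ Finset.Ioi j, w r)) *
              ∏ r ∈ Finset.Ioo i j, (1 + tv k * xv k r) = w i := by
        rw [hw i]
        congr 1
        refine Finset.sum_congr rfl fun j _ => ?_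
        ring
      rw [hwi', hVgen i]
    exact ⟨part1, part2⟩
  exact ⟨fun i => by
    obtain ⟨qi, hqi⟩ := (key i).1
    exact ⟨T * qi, hqi.symm⟩, fun i => (key i).2⟩
end
end
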